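/- arXiv:2308.15598 — 5 statements merged into one kernel-verified Lean document; each statement's English description precedes it below -/
import Mathlib

section
/- Let M = {(s·t, s·(1−t), (1−s)·t, (1−s)·(1−t)) : s, t ∈ [0,1]} ⊆ Δ_3 be the independence model of two binary random variables. Then sup_{p∈Δ_3} inf_{q∈M} D(p‖q) = log 2, and the set of points achieving this supremum is exactly {(1/2, 0, 0, 1/2), (0, 1/2, 1/2, 0)}. -/
open scoped BigOperators Pointwise

attribute [local instance] Classical.propDecidable

def simplex (ι : Type*) [Fintype ι] : Set (ι → ℝ) :=
  {p | (∀ i, 0 ≤ p i) ∧ ∑ i, p i = 1}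

noncomputable def KL {ι : Type*} [Fintype ι] (p q : ι → ℝ) : EReal :=
  if ∀ i, q i = 0 → p i = 0 then (((∑ i, p i * Real.log (p i / q i)) : ℝ) : EReal) else ⊤

noncomputable def divFrom {ι : Type*} [Fintype ι] (M : Set (ι → ℝ)) (p : ι → ℝ) : EReal :=
  ⨅ q ∈ M, KL p q

noncomputable def xlog (x : ℝ) : ℝ := x * Real.log x

lemma xlog_mono_aux {x y : ℝ} (hx : 0 ≤ x) (hy : 0 ≤ y) :
    xlog x ≤ x * Real.log (x + y) := by
  rcases hx.eq_or_lt with h | h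
  · simp [xlog, ← h]
  · exact mul_le_mul_of_nonneg_left (Real.log_le_log h (by linarith)) hx

lemma xlog_subadd {x y : ℝ} (hx : 0 ≤ x) (hy : 0 ≤ y) :
    xlog x + xlog y ≤ xlog (x + y) := by
  have h1 := xlog_mono_aux hx hy
  have h2 := xlog_mono_aux hy hx
  rw [add_comm y x] at h2
  have : xlog (x+y) = x * Real.log (x+y) + y * Real.log (x+y) := by unfold xlog; ring
  linarith

lemma xlog_subadd_strict {x y : ℝ} (hx : 0 < x) (hy : 0 < y) :
    xlog x + xlog y < xlog (x + y) := by
  have h1 : xlog x < x * Real.log (x + y) :=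
    mul_lt_mul_of_pos_left (Real.log_lt_log hx (by linarith)) hx
  have h2 := xlog_mono_aux hy.le hx.le
  rw [add_comm y x] at h2
  have : xlog (x+y) = x * Real.log (x+y) + y * Real.log (x+y) := by unfold xlog; ring
  linarith

lemma key_c {a : ℝ} (ha : 0 ≤ a) : a - 1/2 ≤ a * Real.log 2 + xlog a := by
  rcases ha.eq_or_lt with h | h
  · norm_num [xlog, ← h]
  · have h1 : Real.log ((2*a)⁻¹) ≤ (2*a)⁻¹ - 1 :=
      Real.log_le_sub_one_of_pos (by positivity)
    rw [Real.log_inv] at h1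
    have h2 : 1 - (2*a)⁻¹ ≤ Real.log (2*a) := by linarith
    have h3 : Real.log (2*a) = Real.log 2 + Real.log a := Real.log_mul (by norm_num) h.ne'
    have h4 := mul_le_mul_of_nonneg_left h2 ha
    have e1 : a * (1 - (2*a)⁻¹) = a - 1/2 := by field_simp
    have e2 : a * Real.log (2*a) = a * Real.log 2 + xlog a := by rw [h3]; unfold xlog; ring
    linarith

lemma key_c_strict {a : ℝ} (ha : 0 ≤ a) (hne : a ≠ 1/2) :
    a - 1/2 < a * Real.log 2 + xlog a := by
  rcases ha.eq_or_lt with h | h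
  · norm_num [xlog, ← h]
  · have h1 : Real.log ((2*a)⁻¹) < (2*a)⁻¹ - 1 := by
      apply Real.log_lt_sub_one_of_pos (by positivity)
      intro hc
      apply hne
      field_simp at hc
      linarith
    rw [Real.log_inv] at h1
    have h2 : 1 - (2*a)⁻¹ < Real.log (2*a) := by linarith
    have h3 : Real.log (2*a) = Real.log 2 + Real.log a := Real.log_mul (by norm_num) h.ne'
    have h4 := mul_lt_mul_of_pos_left h2 h
    have e1 : a * (1 - (2*a)⁻¹) = a - 1/2 := by field_simp
    have e2 : a * Real.log (2*a) = a * Real.log 2 + xlog a := by rw [h3]; unfold xlog; ring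
    linarith

lemma entlb {a : ℝ} (ha : 0 ≤ a) (ha1 : a ≤ 1) :
    -Real.log 2 ≤ xlog a + xlog (1 - a) := by
  have h1 := key_c ha
  have h2 := key_c (by linarith : (0:ℝ) ≤ 1 - a)
  nlinarith

lemma entlb_strict {a : ℝ} (ha : 0 ≤ a) (ha1 : a ≤ 1) (hne : a ≠ 1/2) :
    -Real.log 2 < xlog a + xlog (1 - a) := by
  have h1 := key_c_strict ha hne
  have h2 := key_c (by linarith : (0:ℝ) ≤ 1 - a)
  nlinarith
lemma term_split {x c d : ℝ} (hx : 0 ≤ x) (hxc : x ≤ c) (hxd : x ≤ d) :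
    x * Real.log (x / (c * d)) = xlog x - x * Real.log c - x * Real.log d := by
  rcases hx.eq_or_lt with h | h
  · simp [xlog, ← h]
  · have hc : 0 < c := lt_of_lt_of_le h hxc
    have hd : 0 < d := lt_of_lt_of_le h hxd
    rw [Real.log_div h.ne' (by positivity), Real.log_mul hc.ne' hd.ne']
    unfold xlog; ring

/-- the KL divergence to the product of marginals, as a real identity -/
lemma S_identity (x y z w : ℝ) (hx : 0 ≤ x) (hy : 0 ≤ y) (hz : 0 ≤ z) (hw : 0 ≤ w)
    (hs : x + y + z + w = 1) :
    x * Real.log (x / ((x+y) * (x+z))) + y * Real.log (y / ((x+y) * (1-(x+z))))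
      + z * Real.log (z / ((1-(x+y)) * (x+z))) + w * Real.log (w / ((1-(x+y)) * (1-(x+z))))
    = (xlog x + xlog y + xlog z + xlog w)
      - (xlog (x+y) + xlog (1-(x+y))) - (xlog (x+z) + xlog (1-(x+z))) := by
  have e1 := term_split hx (by linarith : x ≤ x + y) (by linarith : x ≤ x + z)
  have e2 := term_split hy (by linarith : y ≤ x + y) (by linarith : y ≤ 1 - (x+z))
  have e3 := term_split hz (by linarith : z ≤ 1 - (x+y)) (by linarith : z ≤ x + z)
  have e4 := term_split hw (by linarith : w ≤ 1 - (x+y)) (by linarith : w ≤ 1 - (x+z))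
  rw [e1, e2, e3, e4]
  have f1 : xlog (x+y) = x * Real.log (x+y) + y * Real.log (x+y) := by unfold xlog; ring
  have f2 : xlog (1-(x+y)) = z * Real.log (1-(x+y)) + w * Real.log (1-(x+y)) := by
    unfold xlog; have : 1 - (x+y) = z + w := by linarith
    rw [this]; ring
  have f3 : xlog (x+z) = x * Real.log (x+z) + z * Real.log (x+z) := by unfold xlog; ring
  have f4 : xlog (1-(x+z)) = y * Real.log (1-(x+z)) + w * Real.log (1-(x+z)) := by
    unfold xlog; have : 1 - (x+z) = y + w := by linarith
    rw [this]; ring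
  rw [term_split hy (by linarith) (by linarith)] at e2
  linarith

lemma S_le (x y z w : ℝ) (hx : 0 ≤ x) (hy : 0 ≤ y) (hz : 0 ≤ z) (hw : 0 ≤ w)
    (hs : x + y + z + w = 1) :
    x * Real.log (x / ((x+y) * (x+z))) + y * Real.log (y / ((x+y) * (1-(x+z))))
      + z * Real.log (z / ((1-(x+y)) * (x+z))) + w * Real.log (w / ((1-(x+y)) * (1-(x+z))))
    ≤ Real.log 2 := by
  rw [S_identity x y z w hx hy hz hw hs]
  have e1 : xlog x + xlog z ≤ xlog (x+z) := xlog_subadd hx hz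
  have e2 : xlog y + xlog w ≤ xlog (1-(x+z)) := by
    have h : 1 - (x+z) = y + w := by linarith
    rw [h]; exact xlog_subadd hy hw
  have e3 : -Real.log 2 ≤ xlog (x+y) + xlog (1-(x+y)) :=
    entlb (by linarith) (by linarith)
  linarith

lemma S_eq (x y z w : ℝ) (hx : 0 ≤ x) (hy : 0 ≤ y) (hz : 0 ≤ z) (hw : 0 ≤ w)
    (hs : x + y + z + w = 1)
    (heq : x * Real.log (x / ((x+y) * (x+z))) + y * Real.log (y / ((x+y) * (1-(x+z))))
      + z * Real.log (z / ((1-(x+y)) * (x+z))) + w * Real.log (w / ((1-(x+y)) * (1-(x+z))))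
    = Real.log 2) :
    (x = 1/2 ∧ y = 0 ∧ z = 0 ∧ w = 1/2) ∨ (x = 0 ∧ y = 1/2 ∧ z = 1/2 ∧ w = 0) := by
  rw [S_identity x y z w hx hy hz hw hs] at heq
  have e1 : xlog x + xlog z ≤ xlog (x+z) := xlog_subadd hx hz
  have e2 : xlog y + xlog w ≤ xlog (1-(x+z)) := by
    have h : 1 - (x+z) = y + w := by linarith
    rw [h]; exact xlog_subadd hy hw
  have e3 : -Real.log 2 ≤ xlog (x+y) + xlog (1-(x+y)) :=
    entlb (by linarith) (by linarith)
  have e1' : xlog x + xlog y ≤ xlog (x+y) := xlog_subadd hx hy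
  have e2' : xlog z + xlog w ≤ xlog (1-(x+y)) := by
    have h : 1 - (x+y) = z + w := by linarith
    rw [h]; exact xlog_subadd hz hw
  have e3' : -Real.log 2 ≤ xlog (x+z) + xlog (1-(x+z)) :=
    entlb (by linarith) (by linarith)
  -- equality forces everything tight
  have ha : x + y = 1/2 := by
    by_contra h
    have := entlb_strict (by linarith : (0:ℝ) ≤ x+y) (by linarith) h
    linarith
  have hb : x + z = 1/2 := by
    by_contra h
    have := entlb_strict (by linarith : (0:ℝ) ≤ x+z) (by linarith) h
    linarith
  have hxz : x * z = 0 := by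
    by_contra h
    have hx' : 0 < x := lt_of_le_of_ne hx (by rintro rfl; simp at h)
    have hz' : 0 < z := lt_of_le_of_ne hz (by rintro rfl; simp at h)
    have := xlog_subadd_strict hx' hz'
    linarith
  have hxy : x * y = 0 := by
    by_contra h
    have hx' : 0 < x := lt_of_le_of_ne hx (by rintro rfl; simp at h)
    have hy' : 0 < y := lt_of_le_of_ne hy (by rintro rfl; simp at h)
    have := xlog_subadd_strict hx' hy'
    linarith
  have hyw : y * w = 0 := by
    by_contra h
    have hy' : 0 < y := lt_of_le_of_ne hy (by rintro rfl; simp at h)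
    have hw' : 0 < w := lt_of_le_of_ne hw (by rintro rfl; simp at h)
    have h5 := xlog_subadd_strict hy' hw'
    have h6 : 1 - (x+z) = y + w := by linarith
    rw [← h6] at h5
    linarith
  rcases mul_eq_zero.mp hxz with h0 | h0
  · -- x = 0
    have hy2 : y = 1/2 := by linarith
    have hw2 : w = 0 := by
      rcases mul_eq_zero.mp hyw with h1 | h1
      · linarith
      · exact h1
    right; exact ⟨h0, hy2, by linarith, hw2⟩
  · -- z = 0
    have hx2 : x = 1/2 := by linarith
    have hy2 : y = 0 := by
      rcases mul_eq_zero.mp hxy with h1 | h1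
      · linarith
      · exact h1
    left; exact ⟨hx2, hy2, h0, by linarith⟩
lemma lowD {s t : ℝ} (hs0 : 0 < s) (hs1 : s < 1) (ht0 : 0 < t) (ht1 : t < 1) :
    Real.log 2 ≤ 1/2 * Real.log (1/2 / (s*t)) + 1/2 * Real.log (1/2 / ((1-s)*(1-t))) := by
  have hs1' : (0:ℝ) < 1 - s := by linarith
  have ht1' : (0:ℝ) < 1 - t := by linarith
  have h1 : s * (1-s) ≤ 1/4 := by nlinarith [sq_nonneg (s - 1/2)]
  have h2 : t * (1-t) ≤ 1/4 := by nlinarith [sq_nonneg (t - 1/2)]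
  have hprod : s * t * ((1-s) * (1-t)) ≤ 1/16 := by
    nlinarith [mul_le_mul h1 h2 (by positivity) (by norm_num : (0:ℝ) ≤ 1/4),
      mul_pos hs0 hs1', mul_pos ht0 ht1']
  have hpos : (0:ℝ) < s * t * ((1-s) * (1-t)) := by positivity
  have hlog : Real.log (s * t * ((1-s) * (1-t))) ≤ Real.log (1/16) :=
    Real.log_le_log hpos hprod
  have h16 : Real.log (1/16 : ℝ) = -(4 * Real.log 2) := by
    rw [show (1/16:ℝ) = (2^4)⁻¹ by norm_num, Real.log_inv, Real.log_pow]
    push_cast; ring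
  have e0 : Real.log (s * t * ((1-s) * (1-t)))
      = Real.log (s*t) + Real.log ((1-s)*(1-t)) :=
    Real.log_mul (by positivity) (by positivity)
  have e1 : Real.log (1/2 / (s*t)) = Real.log (1/2) - Real.log (s*t) :=
    Real.log_div (by norm_num) (by positivity)
  have e2 : Real.log (1/2 / ((1-s)*(1-t))) = Real.log (1/2) - Real.log ((1-s)*(1-t)) :=
    Real.log_div (by norm_num) (by positivity)
  have e3 : Real.log (1/2 : ℝ) = -Real.log 2 := by
    rw [show (1/2:ℝ) = 2⁻¹ by norm_num, Real.log_inv]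
  rw [e0, h16] at hlog
  rw [e1, e2, e3]
  linarith

section main
variable (M : Set (Fin 4 → ℝ))
variable (hM : M = {p | ∃ s t : ℝ, s ∈ Set.Icc (0 : ℝ) 1 ∧ t ∈ Set.Icc (0 : ℝ) 1 ∧
        p = ![s * t, s * (1 - t), (1 - s) * t, (1 - s) * (1 - t)]})

/-- the product of the marginals -/
noncomputable def qstar (p : Fin 4 → ℝ) : Fin 4 → ℝ :=
  ![(p 0 + p 1) * (p 0 + p 2), (p 0 + p 1) * (1 - (p 0 + p 2)),
    (1 - (p 0 + p 1)) * (p 0 + p 2), (1 - (p 0 + p 1)) * (1 - (p 0 + p 2))]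

lemma KL_qstar_le (p : Fin 4 → ℝ) (hp : p ∈ simplex (Fin 4)) :
    KL p (qstar p) ≤ ((Real.log 2 : ℝ) : EReal) := by
  obtain ⟨hpos, hsum⟩ := hp
  rw [Fin.sum_univ_four] at hsum
  have hsupp : ∀ i, qstar p i = 0 → p i = 0 := by
    have h01 := hpos 0; have h11 := hpos 1; have h21 := hpos 2; have h31 := hpos 3
    intro i
    fin_cases i <;> simp only [qstar, Matrix.cons_val_zero, Matrix.cons_val_one,
      Matrix.head_cons, Matrix.cons_val_two, Matrix.tail_cons, Matrix.cons_val_three]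
    · intro h; show p 0 = 0; rcases mul_eq_zero.mp h with h | h <;> linarith
    · intro h; show p 1 = 0; rcases mul_eq_zero.mp h with h | h <;> linarith
    · intro h; show p 2 = 0; rcases mul_eq_zero.mp h with h | h <;> linarith
    · intro h; show p 3 = 0; rcases mul_eq_zero.mp h with h | h <;> linarith
  rw [KL, if_pos hsupp]
  rw [EReal.coe_le_coe_iff]
  rw [Fin.sum_univ_four]
  simp only [qstar, Matrix.cons_val_zero, Matrix.cons_val_one, Matrix.head_cons,
    Matrix.cons_val_two, Matrix.tail_cons, Matrix.cons_val_three]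
  exact S_le (p 0) (p 1) (p 2) (p 3) (hpos 0) (hpos 1) (hpos 2) (hpos 3) hsum

include hM in
lemma qstar_mem (p : Fin 4 → ℝ) (hp : p ∈ simplex (Fin 4)) : qstar p ∈ M := by
  obtain ⟨hpos, hsum⟩ := hp
  rw [Fin.sum_univ_four] at hsum
  rw [hM]
  refine ⟨p 0 + p 1, p 0 + p 2, ⟨by nlinarith [hpos 0, hpos 1], by nlinarith [hpos 2, hpos 3]⟩,
    ⟨by nlinarith [hpos 0, hpos 2], by nlinarith [hpos 1, hpos 3]⟩, rfl⟩

include hM in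
lemma div_upper (p : Fin 4 → ℝ) (hp : p ∈ simplex (Fin 4)) :
    divFrom M p ≤ ((Real.log 2 : ℝ) : EReal) :=
  le_trans (iInf₂_le (qstar p) (qstar_mem M hM p hp)) (KL_qstar_le p hp)


include hM in
lemma div_low0 : ((Real.log 2 : ℝ) : EReal) ≤ divFrom M ![1/2, 0, 0, 1/2] := by
  unfold divFrom
  refine le_iInf₂ fun q hq => ?_
  rw [hM] at hq
  obtain ⟨s, t, ⟨hs0, hs1⟩, ⟨ht0, ht1⟩, rfl⟩ := hq
  by_cases hsupp : ∀ i, (![s * t, s * (1 - t), (1 - s) * t, (1 - s) * (1 - t)]) i = 0 →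
      (![(1:ℝ)/2, 0, 0, 1/2]) i = 0
  · have h0 := hsupp 0
    have h3 := hsupp 3
    simp only [Matrix.cons_val_zero, Matrix.cons_val_one, Matrix.head_cons,
      Matrix.cons_val_two, Matrix.tail_cons, Matrix.cons_val_three] at h0 h3
    norm_num at h0 h3
    have hs0' : 0 < s := lt_of_le_of_ne hs0 (Ne.symm h0.1)
    have ht0' : 0 < t := lt_of_le_of_ne ht0 (Ne.symm h0.2)
    have hs1' : s < 1 := lt_of_le_of_ne hs1 (fun h => h3.1 (by rw [h]; norm_num))
    have ht1' : t < 1 := lt_of_le_of_ne ht1 (fun h => h3.2 (by rw [h]; norm_num))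
    rw [KL, if_pos hsupp, EReal.coe_le_coe_iff, Fin.sum_univ_four]
    simp only [Matrix.cons_val_zero, Matrix.cons_val_one, Matrix.head_cons,
      Matrix.cons_val_two, Matrix.tail_cons, Matrix.cons_val_three, zero_mul, add_zero]
    have := lowD hs0' hs1' ht0' ht1'
    linarith
  · rw [KL, if_neg hsupp]
    exact le_top

include hM in
lemma div_low1 : ((Real.log 2 : ℝ) : EReal) ≤ divFrom M ![0, 1/2, 1/2, 0] := by
  unfold divFrom
  refine le_iInf₂ fun q hq => ?_
  rw [hM] at hq
  obtain ⟨s, t, ⟨hs0, hs1⟩, ⟨ht0, ht1⟩, rfl⟩ := hq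
  by_cases hsupp : ∀ i, (![s * t, s * (1 - t), (1 - s) * t, (1 - s) * (1 - t)]) i = 0 →
      (![(0:ℝ), 1/2, 1/2, 0]) i = 0
  · have h1 := hsupp 1
    have h2 := hsupp 2
    simp only [Matrix.cons_val_zero, Matrix.cons_val_one, Matrix.head_cons,
      Matrix.cons_val_two, Matrix.tail_cons, Matrix.cons_val_three] at h1 h2
    norm_num at h1 h2
    have hs0' : 0 < s := lt_of_le_of_ne hs0 (Ne.symm h1.1)
    have ht0' : 0 < t := lt_of_le_of_ne ht0 (Ne.symm h2.2)
    have ht1' : t < 1 := lt_of_le_of_ne ht1 (fun h => h1.2 (by rw [h]; norm_num))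
    have hs1' : s < 1 := lt_of_le_of_ne hs1 (fun h => h2.1 (by rw [h]; norm_num))
    rw [KL, if_pos hsupp, EReal.coe_le_coe_iff, Fin.sum_univ_four]
    simp only [Matrix.cons_val_zero, Matrix.cons_val_one, Matrix.head_cons,
      Matrix.cons_val_two, Matrix.tail_cons, Matrix.cons_val_three, zero_mul, add_zero,
      zero_add]
    have := lowD hs0' hs1' (by linarith : (0:ℝ) < 1 - t) (by linarith : 1 - t < 1)
    have e : 1 - (1 - t) = t := by ring
    rw [e] at this
    linarith
  · rw [KL, if_neg hsupp]
    exact le_top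

lemma mem0 : (![(1:ℝ)/2, 0, 0, 1/2]) ∈ simplex (Fin 4) := by
  constructor
  · intro i; fin_cases i <;> norm_num
  · rw [Fin.sum_univ_four]; norm_num [Matrix.cons_val_two, Matrix.cons_val_three, Matrix.tail_cons, Matrix.head_cons]

lemma mem1 : (![(0:ℝ), 1/2, 1/2, 0]) ∈ simplex (Fin 4) := by
  constructor
  · intro i; fin_cases i <;> norm_num
  · rw [Fin.sum_univ_four]; norm_num [Matrix.cons_val_two, Matrix.cons_val_three, Matrix.tail_cons, Matrix.head_cons]

include hM in
lemma dval0 : divFrom M ![1/2, 0, 0, 1/2] = ((Real.log 2 : ℝ) : EReal) :=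
  le_antisymm (div_upper M hM _ mem0) (div_low0 M hM)

include hM in
lemma dval1 : divFrom M ![0, 1/2, 1/2, 0] = ((Real.log 2 : ℝ) : EReal) :=
  le_antisymm (div_upper M hM _ mem1) (div_low1 M hM)


include hM in
lemma characterize (p : Fin 4 → ℝ) (hp : p ∈ simplex (Fin 4))
    (heq : divFrom M p = ((Real.log 2 : ℝ) : EReal)) :
    p = ![1/2, 0, 0, 1/2] ∨ p = ![0, 1/2, 1/2, 0] := by
  have hub := KL_qstar_le p hp
  have hlb : ((Real.log 2 : ℝ) : EReal) ≤ KL p (qstar p) := by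
    rw [← heq]
    exact iInf₂_le (qstar p) (qstar_mem M hM p hp)
  have hKL : KL p (qstar p) = ((Real.log 2 : ℝ) : EReal) := le_antisymm hub hlb
  obtain ⟨hpos, hsum⟩ := hp
  rw [Fin.sum_univ_four] at hsum
  have hsupp : ∀ i, qstar p i = 0 → p i = 0 := by
    have h01 := hpos 0; have h11 := hpos 1; have h21 := hpos 2; have h31 := hpos 3
    intro i
    fin_cases i <;> simp only [qstar, Matrix.cons_val_zero, Matrix.cons_val_one,
      Matrix.head_cons, Matrix.cons_val_two, Matrix.tail_cons, Matrix.cons_val_three]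
    · intro h; show p 0 = 0; rcases mul_eq_zero.mp h with h | h <;> linarith
    · intro h; show p 1 = 0; rcases mul_eq_zero.mp h with h | h <;> linarith
    · intro h; show p 2 = 0; rcases mul_eq_zero.mp h with h | h <;> linarith
    · intro h; show p 3 = 0; rcases mul_eq_zero.mp h with h | h <;> linarith
  rw [KL, if_pos hsupp, EReal.coe_eq_coe_iff, Fin.sum_univ_four] at hKL
  simp only [qstar, Matrix.cons_val_zero, Matrix.cons_val_one, Matrix.head_cons,
    Matrix.cons_val_two, Matrix.tail_cons, Matrix.cons_val_three] at hKL
  rcases S_eq (p 0) (p 1) (p 2) (p 3) (hpos 0) (hpos 1) (hpos 2) (hpos 3) hsum hKL with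
    ⟨h1, h2, h3, h4⟩ | ⟨h1, h2, h3, h4⟩
  · left
    funext i
    fin_cases i <;> simp only [Matrix.cons_val_zero, Matrix.cons_val_one, Matrix.head_cons,
      Matrix.cons_val_two, Matrix.tail_cons, Matrix.cons_val_three]
    exacts [h1, h2, h3, h4]
  · right
    funext i
    fin_cases i <;> simp only [Matrix.cons_val_zero, Matrix.cons_val_one, Matrix.head_cons,
      Matrix.cons_val_two, Matrix.tail_cons, Matrix.cons_val_three]
    exacts [h1, h2, h3, h4]

end main

/-- For the independence model of two binary random variables in `Δ_3`, the
maximum divergence is `log 2`, attained exactly at `(1/2,0,0,1/2)` and `(0,1/2,1/2,0)`. -/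
theorem stmt8 (M : Set (Fin 4 → ℝ))
    (hM : M = {p | ∃ s t : ℝ, s ∈ Set.Icc (0 : ℝ) 1 ∧ t ∈ Set.Icc (0 : ℝ) 1 ∧
        p = ![s * t, s * (1 - t), (1 - s) * t, (1 - s) * (1 - t)]}) :
    (⨆ p ∈ simplex (Fin 4), divFrom M p) = ((Real.log 2 : ℝ) : EReal) ∧
    {p | p ∈ simplex (Fin 4) ∧ divFrom M p = ((Real.log 2 : ℝ) : EReal)}
      = {![1/2, 0, 0, 1/2], ![0, 1/2, 1/2, 0]} := by
  constructor
  · apply le_antisymm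
    · exact iSup₂_le fun p hp => div_upper M hM p hp
    · exact le_iSup₂_of_le _ mem0 (le_of_eq (dval0 M hM).symm)
  · ext p
    simp only [Set.mem_setOf_eq, Set.mem_insert_iff, Set.mem_singleton_iff]
    constructor
    · rintro ⟨hp, heq⟩
      exact characterize M hM p hp heq
    · rintro (rfl | rfl)
      · exact ⟨mem0, dval0 M hM⟩
      · exact ⟨mem1, dval1 M hM⟩
end

section
/- Let k ≥ 1 and for each i ∈ {1,…,k} let A_i ∈ ℕ^{d_i×n_i} be a matrix with nonnegative integer entries whose first row is the all-ones vector. Let A be the block-diagonal matrix with diagonal blocks A_1,…,A_k (of size (Σ_i d_i) × (Σ_i n_i)). Then D(M_A) = max{D(M_{A_1}), …, D(M_{A_k})}. -/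
open scoped BigOperators Pointwise

attribute [local instance] Classical.propDecidable

noncomputable def EA {κ ι : Type*} [Fintype κ] [Fintype ι] (A : Matrix κ ι ℕ) : Set (ι → ℝ) :=
  {p | ∃ θ : κ → ℝ, ∀ j, p j =
    Real.exp (∑ i, θ i * (A i j : ℝ)) / ∑ l, Real.exp (∑ i, θ i * (A i l : ℝ))}

noncomputable def toric {κ ι : Type*} [Fintype κ] [Fintype ι] (A : Matrix κ ι ℕ) :
    Set (ι → ℝ) :=
  closure (EA A)

noncomputable def maxDiv {ι : Type*} [Fintype ι] (M : Set (ι → ℝ)) : EReal :=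
  ⨆ p ∈ simplex ι, divFrom M p

/- ### auxiliary lemmas -/

theorem isClosed_simplex (ι : Type*) [Fintype ι] : IsClosed (simplex ι) := by
  have h1 : IsClosed {p : ι → ℝ | ∀ i, 0 ≤ p i} := by
    have : {p : ι → ℝ | ∀ i, 0 ≤ p i} = ⋂ i, {p | 0 ≤ p i} := by ext; simp
    rw [this]
    exact isClosed_iInter fun i => isClosed_le continuous_const (continuous_apply i)
  have h2 : IsClosed {p : ι → ℝ | ∑ i, p i = 1} :=
    isClosed_eq (by continuity) continuous_const
  exact h1.inter h2

theorem EA_subset_simplex {κ ι : Type*} [Fintype κ] [Fintype ι] [Nonempty ι]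
    (A : Matrix κ ι ℕ) : EA A ⊆ simplex ι := by
  rintro p ⟨θ, hθ⟩
  have hZ : 0 < ∑ l, Real.exp (∑ i, θ i * (A i l : ℝ)) :=
    Finset.sum_pos (fun l _ => Real.exp_pos _) Finset.univ_nonempty
  constructor
  · intro j
    rw [hθ j]
    positivity
  · simp only [hθ]
    rw [← Finset.sum_div, div_self hZ.ne']

theorem toric_subset_simplex {κ ι : Type*} [Fintype κ] [Fintype ι] [Nonempty ι]
    (A : Matrix κ ι ℕ) : toric A ⊆ simplex ι :=
  closure_minimal (EA_subset_simplex A) (isClosed_simplex ι)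

theorem KL_ge_entropy {ι : Type*} [Fintype ι] {p q : ι → ℝ}
    (hp : p ∈ simplex ι) (hq : q ∈ simplex ι) :
    ((∑ i, p i * Real.log (p i) : ℝ) : EReal) ≤ KL p q := by
  unfold KL
  split_ifs with h
  · apply EReal.coe_le_coe_iff.2
    apply Finset.sum_le_sum
    intro i _
    rcases eq_or_lt_of_le (hp.1 i) with h0 | hpi
    · simp [← h0]
    · have hqi : 0 < q i := by
        rcases eq_or_lt_of_le (hq.1 i) with h0 | h0
        · exact absurd (h i h0.symm) hpi.ne'
        · exact h0
      have hq1 : q i ≤ 1 := by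
        rw [← hq.2]
        exact Finset.single_le_sum (fun j _ => hq.1 j) (Finset.mem_univ i)
      rw [Real.log_div hpi.ne' hqi.ne']
      nlinarith [Real.log_nonpos (le_of_lt hqi) hq1, hpi.le]
  · exact le_top

theorem divFrom_ge_entropy {ι : Type*} [Fintype ι] {M : Set (ι → ℝ)} (hM : M ⊆ simplex ι)
    {p : ι → ℝ} (hp : p ∈ simplex ι) :
    ((∑ i, p i * Real.log (p i) : ℝ) : EReal) ≤ divFrom M p :=
  le_iInf₂ fun _ hq => KL_ge_entropy hp (hM hq)

theorem sum_sigma_eq {k : ℕ} (n : Fin k → ℕ) (f : (Σ i, Fin (n i)) → ℝ) :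
    ∑ x : Σ i, Fin (n i), f x = ∑ i, ∑ j, f ⟨i, j⟩ := by
  rw [← Finset.univ_sigma_univ, Finset.sum_sigma]

theorem block_col {k : ℕ} (d n : Fin k → ℕ)
    (A : ∀ i : Fin k, Matrix (Fin (d i)) (Fin (n i)) ℕ)
    (θ : (Σ i, Fin (d i)) → ℝ) (i : Fin k) (j : Fin (n i)) :
    ∑ r : Σ i', Fin (d i'), θ r * ((Matrix.blockDiagonal' A) r ⟨i, j⟩ : ℝ)
      = ∑ r : Fin (d i), θ ⟨i, r⟩ * (A i r j : ℝ) := by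
  rw [← Finset.univ_sigma_univ, Finset.sum_sigma]
  rw [Finset.sum_eq_single i]
  · exact Finset.sum_congr rfl fun r _ => by rw [Matrix.blockDiagonal'_apply_eq]
  · intro b _ hb
    exact Finset.sum_eq_zero fun r _ => by
      rw [Matrix.blockDiagonal'_apply_ne _ _ _ hb]; simp
  · intro h; exact absurd (Finset.mem_univ i) h

theorem block_norm_mem_EA {k : ℕ} (d n : Fin k → ℕ)
    (A : ∀ i : Fin k, Matrix (Fin (d i)) (Fin (n i)) ℕ) (i₀ : Fin k) (hn : 0 < n i₀)
    {q : (Σ i, Fin (n i)) → ℝ} (hq : q ∈ EA (Matrix.blockDiagonal' A)) :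
    (fun j => q ⟨i₀, j⟩ / ∑ l, q ⟨i₀, l⟩) ∈ EA (A i₀) := by
  obtain ⟨θ, hθ⟩ := hq
  refine ⟨fun r => θ ⟨i₀, r⟩, fun j => ?_⟩
  have : Nonempty (Fin (n i₀)) := ⟨⟨0, hn⟩⟩
  have hZ : 0 < ∑ l : Σ i, Fin (n i), Real.exp (∑ r : Σ i', Fin (d i'),
      θ r * ((Matrix.blockDiagonal' A) r l : ℝ)) :=
    Finset.sum_pos (fun l _ => Real.exp_pos _) ⟨⟨i₀, ⟨0, hn⟩⟩, Finset.mem_univ _⟩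
  have hsum : ∑ l, q ⟨i₀, l⟩
      = (∑ l : Fin (n i₀), Real.exp (∑ r : Fin (d i₀), θ ⟨i₀, r⟩ * (A i₀ r l : ℝ)))
        / ∑ l : Σ i, Fin (n i), Real.exp (∑ r : Σ i', Fin (d i'),
            θ r * ((Matrix.blockDiagonal' A) r l : ℝ)) := by
    rw [Finset.sum_div]
    apply Finset.sum_congr rfl
    intro l _
    rw [hθ ⟨i₀, l⟩, block_col]
  simp only []
  rw [hθ ⟨i₀, j⟩, hsum, block_col]
  rw [div_div_div_eq, mul_comm]
  exact mul_div_mul_left _ _ hZ.ne'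

theorem block_norm_mem_toric {k : ℕ} (d n : Fin k → ℕ)
    (A : ∀ i : Fin k, Matrix (Fin (d i)) (Fin (n i)) ℕ) (i₀ : Fin k) (hn : 0 < n i₀)
    {q : (Σ i, Fin (n i)) → ℝ} (hq : q ∈ toric (Matrix.blockDiagonal' A))
    (hlam : ∑ l, q ⟨i₀, l⟩ ≠ 0) :
    (fun j => q ⟨i₀, j⟩ / ∑ l, q ⟨i₀, l⟩) ∈ toric (A i₀) := by
  set g : ((Σ i, Fin (n i)) → ℝ) → (Fin (n i₀) → ℝ) :=
    fun q j => q ⟨i₀, j⟩ / ∑ l, q ⟨i₀, l⟩ with hg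
  have hc : ContinuousAt g q := by
    rw [continuousAt_pi]
    intro j
    exact ((continuous_apply (⟨i₀, j⟩ : Σ i, Fin (n i))).continuousAt).div
      ((continuous_finset_sum (Finset.univ : Finset (Fin (n i₀)))
        (fun l _ => continuous_apply (⟨i₀, l⟩ : Σ i, Fin (n i)))).continuousAt) hlam
  have h1 : g q ∈ closure (g '' EA (Matrix.blockDiagonal' A)) :=
    hc.continuousWithinAt.mem_closure_image hq
  have h2 : g '' EA (Matrix.blockDiagonal' A) ⊆ EA (A i₀) := by
    rintro _ ⟨q', hq', rfl⟩
    exact block_norm_mem_EA d n A i₀ hn hq'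
  exact closure_mono h2 h1

theorem dirA {k : ℕ} (d n : Fin k → ℕ)
    (A : ∀ i : Fin k, Matrix (Fin (d i)) (Fin (n i)) ℕ) (i₀ : Fin k) :
    maxDiv (toric (A i₀)) ≤ maxDiv (toric (Matrix.blockDiagonal' A)) := by
  apply iSup₂_le
  intro ph hph
  have hn : 0 < n i₀ := by
    rcases Nat.eq_zero_or_pos (n i₀) with h0 | h
    · exfalso
      have he : IsEmpty (Fin (n i₀)) := ⟨fun j => absurd j.2 (by omega)⟩
      have := hph.2
      rw [Finset.univ_eq_empty, Finset.sum_empty] at this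
      exact one_ne_zero this.symm
    · exact h
  have hne : Nonempty (Σ i, Fin (n i)) := ⟨⟨i₀, ⟨0, hn⟩⟩⟩
  set p : (Σ i, Fin (n i)) → ℝ :=
    fun x => if h : x.1 = i₀ then ph (Fin.cast (congrArg n h) x.2) else 0 with hpdef
  have hpe : ∀ j : Fin (n i₀), p ⟨i₀, j⟩ = ph j := by
    intro j; simp [hpdef]
  have hp : p ∈ simplex (Σ i, Fin (n i)) := by
    constructor
    · intro x
      simp only [hpdef]
      split
      · exact hph.1 _
      · exact le_refl 0
    · rw [sum_sigma_eq n p, Finset.sum_eq_single i₀]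
      · rw [Finset.sum_congr rfl fun j _ => hpe j]
        exact hph.2
      · intro b _ hb
        exact Finset.sum_eq_zero fun j _ => dif_neg hb
      · intro h; exact absurd (Finset.mem_univ i₀) h
  refine le_trans ?_ (le_iSup₂ (f := fun p _ => divFrom (toric (Matrix.blockDiagonal' A)) p) p hp)
  apply le_iInf₂
  intro q hq
  have hqs : q ∈ simplex (Σ i, Fin (n i)) := toric_subset_simplex _ hq
  by_cases hsupp : ∀ j : Fin (n i₀), q ⟨i₀, j⟩ = 0 → ph j = 0
  · have hex : ∃ j, ph j ≠ 0 := by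
      by_contra hno
      push_neg at hno
      have := hph.2
      rw [Finset.sum_eq_zero fun j _ => hno j] at this
      exact one_ne_zero this.symm
    obtain ⟨j₁, hj₁⟩ := hex
    have hq₁ : 0 < q ⟨i₀, j₁⟩ :=
      lt_of_le_of_ne (hqs.1 _) (Ne.symm (mt (hsupp j₁) hj₁))
    have hlam_pos : 0 < ∑ l, q ⟨i₀, l⟩ :=
      Finset.sum_pos' (fun l _ => hqs.1 _) ⟨j₁, Finset.mem_univ _, hq₁⟩
    have hlam_le : ∑ l, q ⟨i₀, l⟩ ≤ 1 := by
      rw [← hqs.2, sum_sigma_eq n q]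
      exact Finset.single_le_sum (f := fun i => ∑ j, q ⟨i, j⟩)
        (fun i _ => Finset.sum_nonneg fun j _ => hqs.1 _) (Finset.mem_univ i₀)
    have hqhat := block_norm_mem_toric d n A i₀ hn hq hlam_pos.ne'
    refine le_trans (iInf₂_le _ hqhat) ?_
    have hcond1 : ∀ j, (q ⟨i₀, j⟩ / ∑ l, q ⟨i₀, l⟩) = 0 → ph j = 0 := by
      intro j h
      rcases div_eq_zero_iff.1 h with h | h
      · exact hsupp j h
      · exact absurd h hlam_pos.ne'
    have hcond2 : ∀ x, q x = 0 → p x = 0 := by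
      rintro ⟨i, j⟩ h
      simp only [hpdef]
      split
      · next hi =>
        subst hi
        exact hsupp _ h
      · rfl
    rw [KL, if_pos hcond1, KL, if_pos hcond2]
    apply EReal.coe_le_coe_iff.2
    rw [sum_sigma_eq n, Finset.sum_eq_single i₀]
    · apply Finset.sum_le_sum
      intro j _
      rw [hpe j]
      rcases eq_or_ne (ph j) 0 with h0 | h0
      · simp [h0]
      · have hphj : 0 < ph j := lt_of_le_of_ne (hph.1 j) (Ne.symm h0)
        have hqj : 0 < q ⟨i₀, j⟩ :=
          lt_of_le_of_ne (hqs.1 _) (Ne.symm (mt (hsupp j) h0))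
        have hqhatj : q ⟨i₀, j⟩ ≤ q ⟨i₀, j⟩ / ∑ l, q ⟨i₀, l⟩ := by
          rw [le_div_iff₀ hlam_pos]
          nlinarith
        apply mul_le_mul_of_nonneg_left _ (hph.1 j)
        apply Real.log_le_log (by positivity)
        apply div_le_div_of_nonneg_left hphj.le hqj
        exact hqhatj
    · intro b _ hb
      apply Finset.sum_eq_zero
      intro j _
      have : p ⟨b, j⟩ = 0 := dif_neg hb
      rw [this, zero_mul]
    · intro h; exact absurd (Finset.mem_univ i₀) h
  · push_neg at hsupp
    obtain ⟨j, hj0, hjne⟩ := hsupp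
    have : ¬ ∀ x, q x = 0 → p x = 0 := by
      push_neg
      exact ⟨⟨i₀, j⟩, hj0, by rw [hpe j]; exact hjne⟩
    rw [KL, if_neg this]
    exact le_top

theorem mix_mem_EA {k : ℕ} (d n : Fin k → ℕ) (hd : ∀ i, 0 < d i)
    (A : ∀ i : Fin k, Matrix (Fin (d i)) (Fin (n i)) ℕ)
    (hfirst : ∀ (i : Fin k) (j : Fin (n i)), A i ⟨0, hd i⟩ j = 1)
    (lam : Fin k → ℝ) (h1 : ∀ i, 0 < n i → 0 < lam i) (h2 : ∀ i, n i = 0 → lam i = 0)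
    (h3 : ∑ i, lam i = 1)
    (v : ∀ i, Fin (n i) → ℝ) (hv : ∀ i, v i ∈ EA (A i)) :
    (fun x : Σ i, Fin (n i) => lam x.1 * v x.1 x.2) ∈ EA (Matrix.blockDiagonal' A) := by
  choose φ hφ using hv
  set W : Fin k → ℝ := fun i => ∑ l, Real.exp (∑ r, φ i r * (A i r l : ℝ)) with hW
  set θ : (Σ i, Fin (d i)) → ℝ :=
    fun x => φ x.1 x.2 + (if x.2 = ⟨0, hd x.1⟩ then Real.log (lam x.1 / W x.1) else 0) with hθdef
  have hWpos : ∀ i, 0 < n i → 0 < W i := fun i hi =>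
    Finset.sum_pos (fun l _ => Real.exp_pos _) ⟨⟨0, hi⟩, Finset.mem_univ _⟩
  have hcol : ∀ (i : Fin k) (j : Fin (n i)),
      ∑ r : Fin (d i), θ ⟨i, r⟩ * (A i r j : ℝ)
        = (∑ r : Fin (d i), φ i r * (A i r j : ℝ)) + Real.log (lam i / W i) := by
    intro i j
    have : ∀ r : Fin (d i), θ ⟨i, r⟩ * (A i r j : ℝ)
        = φ i r * (A i r j : ℝ)
          + (if r = ⟨0, hd i⟩ then Real.log (lam i / W i) else 0) * (A i r j : ℝ) := by
      intro r; rw [hθdef]; ring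
    rw [Finset.sum_congr rfl fun r _ => this r, Finset.sum_add_distrib]
    congr 1
    rw [Finset.sum_eq_single (⟨0, hd i⟩ : Fin (d i))]
    · rw [if_pos rfl, hfirst i j]; simp
    · intro b _ hb; rw [if_neg hb, zero_mul]
    · intro h; exact absurd (Finset.mem_univ _) h
  have hexp : ∀ (i : Fin k) (j : Fin (n i)),
      Real.exp (∑ r : Fin (d i), θ ⟨i, r⟩ * (A i r j : ℝ))
        = Real.exp (∑ r : Fin (d i), φ i r * (A i r j : ℝ)) * (lam i / W i) := by
    intro i j
    have hn : 0 < n i := j.pos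
    rw [hcol, Real.exp_add, Real.exp_log (div_pos (h1 i hn) (hWpos i hn))]
  have hZ : ∑ l : Σ i, Fin (n i), Real.exp (∑ r : Σ i', Fin (d i'),
      θ r * ((Matrix.blockDiagonal' A) r l : ℝ)) = 1 := by
    rw [sum_sigma_eq n]
    have : ∀ i : Fin k, (∑ j : Fin (n i), Real.exp (∑ r : Σ i', Fin (d i'),
        θ r * ((Matrix.blockDiagonal' A) r ⟨i, j⟩ : ℝ))) = lam i := by
      intro i
      rcases Nat.eq_zero_or_pos (n i) with h0 | hpos
      · have he : IsEmpty (Fin (n i)) := ⟨fun j => absurd j.2 (by omega)⟩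
        rw [Finset.univ_eq_empty, Finset.sum_empty, h2 i h0]
      · have : ∀ j : Fin (n i), Real.exp (∑ r : Σ i', Fin (d i'),
            θ r * ((Matrix.blockDiagonal' A) r ⟨i, j⟩ : ℝ))
            = Real.exp (∑ r : Fin (d i), φ i r * (A i r j : ℝ)) * (lam i / W i) := by
          intro j; rw [block_col, hexp]
        rw [Finset.sum_congr rfl fun j _ => this j, ← Finset.sum_mul]
        rw [show (∑ l : Fin (n i), Real.exp (∑ r : Fin (d i), φ i r * (A i r l : ℝ))) = W i
          from rfl]
        rw [mul_comm, div_mul_cancel₀ _ (hWpos i hpos).ne']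
    rw [Finset.sum_congr rfl fun i _ => this i, h3]
  refine ⟨θ, ?_⟩
  rintro ⟨i, j⟩
  rw [hZ, block_col, hexp, div_one]
  show lam i * v i j = _
  rw [hφ i j]
  simp only [hW]
  ring

theorem mix_mem_toric {k : ℕ} (d n : Fin k → ℕ) (hd : ∀ i, 0 < d i)
    (A : ∀ i : Fin k, Matrix (Fin (d i)) (Fin (n i)) ℕ)
    (hfirst : ∀ (i : Fin k) (j : Fin (n i)), A i ⟨0, hd i⟩ j = 1)
    (lam : Fin k → ℝ) (h1 : ∀ i, 0 ≤ lam i) (h2 : ∀ i, n i = 0 → lam i = 0)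
    (h3 : ∑ i, lam i = 1)
    (v : ∀ i, Fin (n i) → ℝ) (hv : ∀ i, v i ∈ toric (A i)) :
    (fun x : Σ i, Fin (n i) => lam x.1 * v x.1 x.2) ∈ toric (Matrix.blockDiagonal' A) := by
  have hex : ∃ i, 0 < n i := by
    by_contra hno
    push_neg at hno
    have hz : ∀ i, lam i = 0 := fun i => h2 i (Nat.le_zero.mp (hno i))
    rw [Finset.sum_congr rfl fun i _ => hz i, Finset.sum_const, smul_zero] at h3
    exact one_ne_zero h3.symm
  obtain ⟨i₁, hi₁⟩ := hex
  set NE : Finset (Fin k) := Finset.univ.filter (fun i => 0 < n i) with hNE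
  have hNEne : i₁ ∈ NE := by simp [hNE, hi₁]
  have hcard : 0 < (NE.card : ℝ) := by
    have : 0 < NE.card := Finset.card_pos.2 ⟨i₁, hNEne⟩
    exact_mod_cast this
  set u : Fin k → ℝ := fun i => if 0 < n i then ((NE.card : ℝ))⁻¹ else 0 with hu
  have husum : ∑ i, u i = 1 := by
    rw [hu]
    rw [← Finset.sum_filter, ← hNE, Finset.sum_const, nsmul_eq_mul]
    exact mul_inv_cancel₀ hcard.ne'
  set T : Set (Fin k → ℝ) :=
    {a | (∀ i, 0 < n i → 0 < a i) ∧ (∀ i, n i = 0 → a i = 0) ∧ ∑ i, a i = 1} with hT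
  -- lam is in the closure of T
  have hlamT : lam ∈ closure T := by
    set g : ℝ → (Fin k → ℝ) := fun t i => (1 - t) * lam i + t * u i with hgdef
    have hg : Continuous g := by
      apply continuous_pi
      intro i
      exact ((continuous_const.sub continuous_id).mul continuous_const).add
        (continuous_id.mul continuous_const)
    have hg0 : g 0 = lam := by
      funext i; simp [hgdef]
    have htend : Filter.Tendsto g (nhdsWithin 0 (Set.Ioi (0:ℝ))) (nhds lam) := by
      rw [← hg0]
      exact (hg.tendsto 0).mono_left nhdsWithin_le_nhds
    apply mem_closure_of_tendsto htend
    have h01 : Set.Ioo (0:ℝ) 1 ∈ nhdsWithin 0 (Set.Ioi (0:ℝ)) :=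
      Ioo_mem_nhdsGT_of_mem (by constructor <;> norm_num)
    filter_upwards [h01] with t ht
    refine ⟨?_, ?_, ?_⟩
    · intro i hi
      have hui : u i = ((NE.card : ℝ))⁻¹ := if_pos hi
      have := h1 i
      have h1t : (0:ℝ) < 1 - t := by linarith [ht.2]
      have := inv_pos.2 hcard
      simp only [hgdef]
      rw [hui]
      nlinarith [ht.1]
    · intro i hi
      have hui : u i = 0 := if_neg (by omega)
      simp only [hgdef]
      rw [hui, h2 i hi]
      ring
    · simp only [hgdef]
      rw [Finset.sum_add_distrib, ← Finset.mul_sum, ← Finset.mul_sum, h3, husum]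
      ring
  -- the assembling map
  set f : ((Fin k → ℝ) × (∀ i, Fin (n i) → ℝ)) → ((Σ i, Fin (n i)) → ℝ) :=
    fun ab x => ab.1 x.1 * ab.2 x.1 x.2 with hf
  have hfc : Continuous f := by
    apply continuous_pi
    intro x
    exact ((continuous_apply x.1).comp continuous_fst).mul
      ((continuous_apply x.2).comp ((continuous_apply x.1).comp continuous_snd))
  set S : Set ((Fin k → ℝ) × (∀ i, Fin (n i) → ℝ)) :=
    T ×ˢ Set.univ.pi (fun i => EA (A i)) with hS
  have hmem : (lam, v) ∈ closure S := by
    rw [hS, closure_prod_eq, closure_pi_set]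
    exact Set.mk_mem_prod hlamT (fun i _ => hv i)
  have himg : f (lam, v) ∈ closure (f '' S) :=
    hfc.continuousAt.continuousWithinAt.mem_closure_image hmem
  have hsub : f '' S ⊆ EA (Matrix.blockDiagonal' A) := by
    rintro _ ⟨⟨a, w⟩, ⟨⟨ha1, ha2, ha3⟩, hw⟩, rfl⟩
    exact mix_mem_EA d n hd A hfirst a ha1 ha2 ha3 w (fun i => hw i (Set.mem_univ i))
  exact closure_mono hsub himg

theorem dirB {k : ℕ} (d n : Fin k → ℕ) (hd : ∀ i, 0 < d i)
    (A : ∀ i : Fin k, Matrix (Fin (d i)) (Fin (n i)) ℕ)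
    (hfirst : ∀ (i : Fin k) (j : Fin (n i)), A i ⟨0, hd i⟩ j = 1) :
    maxDiv (toric (Matrix.blockDiagonal' A)) ≤ ⨆ i : Fin k, maxDiv (toric (A i)) := by
  set Mx := ⨆ i : Fin k, maxDiv (toric (A i)) with hMx
  apply iSup₂_le
  intro p hp
  -- some block is nonempty
  have hne : Nonempty (Σ i, Fin (n i)) := by
    by_contra hno
    have he : IsEmpty (Σ i, Fin (n i)) := not_nonempty_iff.mp hno
    have := hp.2
    rw [Finset.univ_eq_empty, Finset.sum_empty] at this
    exact one_ne_zero this.symm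
  obtain ⟨i₁, j₁⟩ := hne.some
  have hn₁ : 0 < n i₁ := j₁.pos
  have hne₁ : Nonempty (Fin (n i₁)) := ⟨j₁⟩
  -- Mx is not ⊥
  have hMxbot : Mx ≠ ⊥ := by
    set uu : Fin (n i₁) → ℝ := fun _ => ((n i₁ : ℝ))⁻¹ with huu
    have hnr : 0 < ((n i₁ : ℝ)) := by exact_mod_cast hn₁
    have huus : uu ∈ simplex (Fin (n i₁)) := by
      constructor
      · intro j; rw [huu]; positivity
      · rw [huu, Finset.sum_const, nsmul_eq_mul, Finset.card_univ, Fintype.card_fin]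
        exact mul_inv_cancel₀ hnr.ne'
    have hent := divFrom_ge_entropy (toric_subset_simplex (A i₁)) huus
    have hle : divFrom (toric (A i₁)) uu ≤ Mx :=
      le_trans (le_iSup₂ (f := fun p _ => divFrom (toric (A i₁)) p) uu huus)
        (le_iSup (fun i => maxDiv (toric (A i))) i₁)
    intro hbot
    rw [hbot, le_bot_iff] at hle
    rw [hle] at hent
    exact (EReal.bot_lt_coe _).not_ge hent
  rcases eq_or_ne Mx ⊤ with hT | hT
  · rw [hT]; exact le_top
  set m : ℝ := Mx.toReal with hm
  have hmeq : (m : EReal) = Mx := EReal.coe_toReal hT hMxbot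
  rw [← hmeq]
  by_contra hcon
  push_neg at hcon
  obtain ⟨r, hmr, hrdiv⟩ := EReal.exists_between_coe_real hcon
  -- the block masses
  set lam : Fin k → ℝ := fun i => ∑ j, p ⟨i, j⟩ with hlam
  have hlam0 : ∀ i, 0 ≤ lam i := fun i => Finset.sum_nonneg fun j _ => hp.1 _
  have hlam1 : ∑ i, lam i = 1 := by rw [hlam, ← sum_sigma_eq n p]; exact hp.2
  have hlamempty : ∀ i, n i = 0 → lam i = 0 := by
    intro i hi
    have he : IsEmpty (Fin (n i)) := ⟨fun j => absurd j.2 (by omega)⟩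
    show (∑ j : Fin (n i), p ⟨i, j⟩) = 0
    rw [Finset.univ_eq_empty, Finset.sum_empty]
  have hpzero : ∀ (i : Fin k) (j : Fin (n i)), lam i = 0 → p ⟨i, j⟩ = 0 := by
    intro i j hi
    have h := (Finset.sum_eq_zero_iff_of_nonneg
      (s := (Finset.univ : Finset (Fin (n i)))) (f := fun j => p ⟨i, j⟩)
      (fun j _ => hp.1 ⟨i, j⟩)).1 hi
    exact h j (Finset.mem_univ j)
  -- choose near-optimal block models
  have key : ∀ i : Fin k, ∃ v : Fin (n i) → ℝ, v ∈ toric (A i) ∧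
      (lam i ≠ 0 → (∀ j, v j = 0 → p ⟨i, j⟩ = 0) ∧
        ∑ j, (p ⟨i, j⟩ / lam i) * Real.log ((p ⟨i, j⟩ / lam i) / v j) ≤ r) := by
    intro i
    rcases eq_or_ne (lam i) 0 with h0 | h0
    · -- any toric point works; EA is nonempty via θ = 0
      refine ⟨fun j => Real.exp (∑ t, (0:ℝ) * (A i t j : ℝ))
        / ∑ l, Real.exp (∑ t, (0:ℝ) * (A i t l : ℝ)), ?_, fun hc => absurd h0 hc⟩
      · exact subset_closure ⟨fun _ => 0, fun j => rfl⟩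
    · have hlpos : 0 < lam i := lt_of_le_of_ne (hlam0 i) (Ne.symm h0)
      set ph : Fin (n i) → ℝ := fun j => p ⟨i, j⟩ / lam i with hph
      have hphs : ph ∈ simplex (Fin (n i)) := by
        constructor
        · intro j; exact div_nonneg (hp.1 _) hlpos.le
        · rw [hph, ← Finset.sum_div,
            show (∑ j : Fin (n i), p ⟨i, j⟩) = lam i from rfl, div_self h0]
      have hlt : divFrom (toric (A i)) ph < (r : EReal) := by
        calc divFrom (toric (A i)) ph
            ≤ Mx := le_trans (le_iSup₂ (f := fun p _ => divFrom (toric (A i)) p) ph hphs)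
              (le_iSup (fun i => maxDiv (toric (A i))) i)
          _ = (m : EReal) := hmeq.symm
          _ < (r : EReal) := hmr
      rw [divFrom] at hlt
      rw [iInf_lt_iff] at hlt
      obtain ⟨v, hv⟩ := hlt
      rw [iInf_lt_iff] at hv
      obtain ⟨hvmem, hvlt⟩ := hv
      rw [KL] at hvlt
      by_cases hcond : ∀ j, v j = 0 → ph j = 0
      · rw [if_pos hcond] at hvlt
        refine ⟨v, hvmem, fun _ => ⟨?_, ?_⟩⟩
        · intro j hj
          have := hcond j hj
          rw [hph] at this
          rcases div_eq_zero_iff.1 this with h | h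
          · exact h
          · exact absurd h h0
        · exact le_of_lt (EReal.coe_lt_coe_iff.1 hvlt)
      · rw [if_neg hcond] at hvlt
        exact absurd hvlt (not_top_lt)
  choose v hvmem hvgood using key
  -- assemble q
  set q : (Σ i, Fin (n i)) → ℝ := fun x => lam x.1 * v x.1 x.2 with hq
  have hqmem : q ∈ toric (Matrix.blockDiagonal' A) :=
    mix_mem_toric d n hd A hfirst lam hlam0 hlamempty hlam1 v hvmem
  have hvnonneg : ∀ (i : Fin k) (j : Fin (n i)), 0 ≤ v i j := by
    intro i j
    have : Nonempty (Fin (n i)) := ⟨j⟩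
    exact (toric_subset_simplex (A i) (hvmem i)).1 j
  -- KL p q ≤ r
  have hKL : KL p q ≤ (r : EReal) := by
    have hcond : ∀ x, q x = 0 → p x = 0 := by
      rintro ⟨i, j⟩ hx
      rw [hq] at hx
      rcases mul_eq_zero.1 hx with h | h
      · exact hpzero i j h
      · rcases eq_or_ne (lam i) 0 with h0 | h0
        · exact hpzero i j h0
        · exact (hvgood i h0).1 j h
    rw [KL, if_pos hcond]
    apply EReal.coe_le_coe_iff.2
    rw [sum_sigma_eq n]
    calc ∑ i, ∑ j, p ⟨i, j⟩ * Real.log (p ⟨i, j⟩ / q ⟨i, j⟩)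
        ≤ ∑ i, lam i * r := by
          apply Finset.sum_le_sum
          intro i _
          rcases eq_or_ne (lam i) 0 with h0 | h0
          · rw [Finset.sum_eq_zero fun j _ => by rw [hpzero i j h0, zero_mul], h0, zero_mul]
          · have : ∀ j : Fin (n i), p ⟨i, j⟩ * Real.log (p ⟨i, j⟩ / q ⟨i, j⟩)
                = lam i * ((p ⟨i, j⟩ / lam i) * Real.log ((p ⟨i, j⟩ / lam i) / v i j)) := by
              intro j
              rw [hq]
              have : p ⟨i, j⟩ / (lam i * v i j) = (p ⟨i, j⟩ / lam i) / v i j :=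
                div_mul_eq_div_div _ _ _
              rw [this, ← mul_assoc, mul_div_cancel₀ _ h0]
            rw [Finset.sum_congr rfl fun j _ => this j, ← Finset.mul_sum]
            exact mul_le_mul_of_nonneg_left ((hvgood i h0).2) (hlam0 i)
      _ = r := by rw [← Finset.sum_mul, hlam1, one_mul]
  have : divFrom (toric (Matrix.blockDiagonal' A)) p ≤ (r : EReal) :=
    le_trans (iInf₂_le q hqmem) hKL
  exact absurd this (not_le.2 hrdiv)

/-- For a block-diagonal matrix `A` with blocks `A_1,…,A_k`, each having the
all-ones vector as its first row, the maximum divergence from `M_A` is the maximum of the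
maximum divergences from the `M_{A_i}`. -/
theorem stmt9 {k : ℕ} (hk : 1 ≤ k) (d n : Fin k → ℕ) (hd : ∀ i, 0 < d i)
    (A : ∀ i : Fin k, Matrix (Fin (d i)) (Fin (n i)) ℕ)
    (hfirst : ∀ (i : Fin k) (j : Fin (n i)), A i ⟨0, hd i⟩ j = 1) :
    maxDiv (toric (Matrix.blockDiagonal' A)) = ⨆ i : Fin k, maxDiv (toric (A i)) :=
  le_antisymm (dirB d n hd A hfirst) (iSup_le fun i => dirA d n A i)
end

section
/- Let A be a real d×n matrix whose first row is the all-ones vector, with columns a_1,…,a_n ∈ ℝ^d, let b ∈ ℝ^d, and suppose Q_b = {p ∈ Δ_{n−1} : Ap = b} is nonempty. Then the map v ↦ supp(v) is a bijection from the set of extreme points of Q_b onto the set of subsets σ ⊆ {1,…,n} such that the columns {a_i : i ∈ σ} are linearly independent and b lies in the relative (intrinsic) interior of conv{a_i : i ∈ σ}. -/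
open scoped BigOperators Pointwise

attribute [local instance] Classical.propDecidable

private lemma sum_coe_eq_sum' {n : ℕ} {M : Type*} [AddCommMonoid M] (σ : Set (Fin n))
    (f : Fin n → M) (hf : ∀ i ∉ σ, f i = 0) : ∑ i : σ, f ↑i = ∑ i, f i := by
  classical
  rw [← Finset.sum_toFinset_eq_subtype (· ∈ σ) f]
  apply Finset.sum_subset (Finset.subset_univ _)
  intro x _ hx
  exact hf x (by simpa using hx)

section Aux

variable {d n : ℕ} (a : Fin n → Fin d → ℝ)

/-- The linear map sending weights on `σ` to the corresponding combination of columns. -/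
noncomputable def colComb (σ : Set (Fin n)) : (↥σ → ℝ) →ₗ[ℝ] (Fin d → ℝ) where
  toFun := fun u => ∑ i : σ, u i • a ↑i
  map_add' := by
    intro u v
    simp [add_smul, Finset.sum_add_distrib]
  map_smul' := by
    intro c u
    simp [smul_smul, Finset.smul_sum]

lemma colComb_apply (σ : Set (Fin n)) (u : ↥σ → ℝ) :
    colComb a σ u = ∑ i : σ, u i • a ↑i := rfl

lemma colComb_inj {σ : Set (Fin n)}
    (hli : LinearIndependent ℝ (fun i : σ => a ↑i)) :
    LinearMap.ker (colComb a σ) = ⊥ := by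
  rw [LinearMap.ker_eq_bot']
  intro u hu
  rw [Fintype.linearIndependent_iff] at hli
  funext i
  exact hli u hu i

/-- Representation of points of the convex hull of the columns of `σ`. -/
lemma mem_convexHull_repr {σ : Set (Fin n)} {x : Fin d → ℝ}
    (hx : x ∈ convexHull ℝ (a '' σ)) :
    ∃ u : ↥σ → ℝ, (∀ i, 0 ≤ u i) ∧ ∑ i, u i = 1 ∧ colComb a σ u = x := by
  classical
  rw [Set.image_eq_range, convexHull_range_eq_exists_affineCombination] at hx
  obtain ⟨t, w, hw0, hw1, hwx⟩ := hx
  refine ⟨fun i => if i ∈ t then w i else 0, ?_, ?_, ?_⟩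
  · intro i
    dsimp only
    split
    · exact hw0 i ‹_›
    · exact le_refl 0
  · simp only
    rw [Finset.sum_ite_mem, Finset.univ_inter, hw1]
  · rw [colComb_apply]
    have : ∀ i : ↥σ, (if i ∈ t then w i else 0) • a ↑i
        = if i ∈ t then w i • a ↑i else 0 := by
      intro i; split <;> simp
    simp_rw [this]
    rw [Finset.sum_ite_mem, Finset.univ_inter,
      ← Finset.affineCombination_eq_linear_combination t _ w hw1, hwx]


lemma affineSpan_repr {σ : Set (Fin n)} {y : Fin d → ℝ}
    (hy : y ∈ affineSpan ℝ (a '' σ)) :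
    ∃ u : ↥σ → ℝ, ∑ i, u i = 1 ∧ colComb a σ u = y := by
  rw [Set.image_eq_range] at hy
  obtain ⟨u, hu1, hu2⟩ := eq_affineCombination_of_mem_affineSpan_of_fintype hy
  refine ⟨u, hu1, ?_⟩
  rw [colComb_apply, ← Finset.affineCombination_eq_linear_combination _ _ u hu1, hu2]

lemma colComb_mem_convexHull {σ : Set (Fin n)} (u : ↥σ → ℝ)
    (h0 : ∀ i, 0 ≤ u i) (h1 : ∑ i, u i = 1) :
    colComb a σ u ∈ convexHull ℝ (a '' σ) := by
  rw [Set.image_eq_range]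
  have := affineCombination_mem_convexHull (s := Finset.univ)
    (v := fun i : σ => a ↑i) (w := u) (fun i _ => h0 i) (by simpa using h1)
  rwa [Finset.affineCombination_eq_linear_combination _ _ _ (by simpa using h1),
    ← colComb_apply] at this

lemma mem_intrinsic_of_pos_weights {σ : Set (Fin n)} {b : Fin d → ℝ}
    (hli : LinearIndependent ℝ (fun i : σ => a ↑i))
    (u : ↥σ → ℝ) (hpos : ∀ i, 0 < u i) (hsum : ∑ i, u i = 1)
    (hub : colComb a σ u = b) :
    b ∈ intrinsicInterior ℝ (convexHull ℝ (a '' σ)) := by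
  obtain ⟨g, hg⟩ := (colComb a σ).exists_leftInverse_of_injective (colComb_inj a hli)
  have hgL : ∀ v, g (colComb a σ v) = v := fun v => LinearMap.congr_fun hg v
  have hbch : b ∈ convexHull ℝ (a '' σ) :=
    hub ▸ colComb_mem_convexHull a u (fun i => (hpos i).le) hsum
  set E := affineSpan ℝ (convexHull ℝ (a '' σ)) with hE
  have hspan : ∀ x : Fin d → ℝ, x ∈ E ↔ x ∈ affineSpan ℝ (a '' σ) := by
    intro x; rw [hE, affineSpan_convexHull]
  have hbE : b ∈ E := (hspan b).2 (convexHull_subset_affineSpan _ hbch)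
  set U : Set E := {y | ∀ i : σ, 0 < g ↑y i} with hU
  have hUopen : IsOpen U := by
    have : U = ⋂ i : σ, (fun y : E => g ↑y i) ⁻¹' Set.Ioi 0 := by
      ext y; simp [hU, Set.mem_iInter]
    rw [this]
    exact isOpen_iInter_of_finite fun i => (isOpen_Ioi).preimage
      ((continuous_apply i).comp (g.continuous_of_finiteDimensional.comp continuous_subtype_val))
  have hUsub : U ⊆ ((↑) ⁻¹' (convexHull ℝ (a '' σ)) : Set E) := by
    rintro ⟨y, hyE⟩ hyU
    obtain ⟨v, hv1, hv2⟩ := affineSpan_repr a ((hspan y).1 hyE)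
    have hgv : g y = v := by rw [← hv2, hgL]
    have hvpos : ∀ i, 0 ≤ v i := by
      intro i
      have := hyU i
      rw [show ((⟨y, hyE⟩ : E) : Fin d → ℝ) = y from rfl, hgv] at this
      exact this.le
    show y ∈ convexHull ℝ (a '' σ)
    rw [← hv2]
    exact colComb_mem_convexHull a v hvpos hv1
  rw [mem_intrinsicInterior]
  refine ⟨⟨b, hbE⟩, interior_maximal hUsub hUopen ?_, rfl⟩
  intro i
  rw [show ((⟨b, hbE⟩ : E) : Fin d → ℝ) = b from rfl, ← hub, hgL]
  exact hpos i

lemma pos_weights_of_mem_intrinsic {σ : Set (Fin n)} {b : Fin d → ℝ}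
    (hli : LinearIndependent ℝ (fun i : σ => a ↑i))
    (hb : b ∈ intrinsicInterior ℝ (convexHull ℝ (a '' σ))) :
    ∃ u : ↥σ → ℝ, (∀ i, 0 < u i) ∧ ∑ i, u i = 1 ∧ colComb a σ u = b := by
  obtain ⟨y, hyint, hyb⟩ := mem_intrinsicInterior.1 hb
  have hbch : b ∈ convexHull ℝ (a '' σ) := intrinsicInterior_subset hb
  obtain ⟨u, hu0, hu1, hu2⟩ := mem_convexHull_repr a hbch
  refine ⟨u, ?_, hu1, hu2⟩
  by_contra hcon
  push_neg at hcon
  obtain ⟨i0, hi0⟩ := hcon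
  have hui0 : u i0 = 0 := le_antisymm hi0 (hu0 i0)
  obtain ⟨yv, hyE⟩ := y
  have hyvb : yv = b := hyb
  subst hyvb
  have hmem : ((↑) ⁻¹' (convexHull ℝ (a '' σ)) : Set (affineSpan ℝ (convexHull ℝ (a '' σ))))
      ∈ nhds (⟨yv, hyE⟩ : affineSpan ℝ (convexHull ℝ (a '' σ))) :=
    mem_interior_iff_mem_nhds.1 hyint
  rw [nhds_subtype_eq_comap] at hmem
  obtain ⟨W, hW, hWsub⟩ := Filter.mem_comap.1 hmem
  obtain ⟨ε, hε, hball⟩ := Metric.mem_nhds_iff.1 hW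
  set X := ‖yv - a ↑i0‖ with hX
  have hX0 : 0 ≤ X := norm_nonneg _
  set t := ε / (2 * (X + 1)) with ht
  have htpos : 0 < t := by positivity
  set yt := yv + t • (yv - a ↑i0) with hyt
  have hytball : yt ∈ Metric.ball yv ε := by
    rw [Metric.mem_ball, dist_eq_norm]
    have h1 : yt - yv = t • (yv - a ↑i0) := by rw [hyt]; abel
    rw [h1, norm_smul, Real.norm_eq_abs, abs_of_pos htpos]
    have h2 : t * (X + 1) = ε / 2 := by
      rw [ht]; field_simp
    nlinarith
  have haE : a ↑i0 ∈ affineSpan ℝ (convexHull ℝ (a '' σ)) := by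
    rw [affineSpan_convexHull]
    exact subset_affineSpan ℝ _ (Set.mem_image_of_mem a i0.2)
  have hytE : yt ∈ affineSpan ℝ (convexHull ℝ (a '' σ)) := by
    have := AffineSubspace.smul_vsub_vadd_mem
      (affineSpan ℝ (convexHull ℝ (a '' σ))) t hyE haE hyE
    simpa [hyt, vsub_eq_sub, vadd_eq_add, add_comm] using this
  have hytch : yt ∈ convexHull ℝ (a '' σ) :=
    hWsub (show ((⟨yt, hytE⟩ : affineSpan ℝ (convexHull ℝ (a '' σ))) : Fin d → ℝ) ∈ W
      from hball hytball)
  obtain ⟨u', hu'0, hu'1, hu'2⟩ := mem_convexHull_repr a hytch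
  set esingle : ↥σ → ℝ := Pi.single i0 1 with hes
  have hsingle : colComb a σ esingle = a ↑i0 := by
    rw [colComb_apply, hes]
    simp [Pi.single_apply, ite_smul]
  have hu2' : colComb a σ ((1 + t) • u - t • esingle) = yt := by
    rw [map_sub, map_smul, map_smul, hsingle, hu2, hyt]
    module
  have hinj : Function.Injective (colComb a σ) :=
    LinearMap.ker_eq_bot.1 (colComb_inj a hli)
  have heq : u' = (1 + t) • u - t • esingle := hinj (by rw [hu'2, hu2'])
  have : u' i0 = -t := by
    rw [heq]
    simp [hes, hui0]
  linarith [hu'0 i0]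

end Aux

/-- For a real `d×n` matrix `A` whose first row is all ones and a nonempty
logarithmic Voronoi polytope `Q_b`, the support map is a bijection from the extreme points of
`Q_b` onto the sets `σ` of column indices with linearly independent columns such that `b` lies
in the relative interior of their convex hull. -/
theorem stmt10 {d n : ℕ} (hd : 0 < d) (A : Matrix (Fin d) (Fin n) ℝ)
    (hfirst : ∀ j, A ⟨0, hd⟩ j = 1) (b : Fin d → ℝ)
    (Qb : Set (Fin n → ℝ))
    (hQb : Qb = {p | p ∈ simplex (Fin n) ∧ A.mulVec p = b})
    (hne : Qb.Nonempty) :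
    Set.BijOn (fun v => Function.support v) (Set.extremePoints ℝ Qb)
      {σ : Set (Fin n) |
        LinearIndependent ℝ (fun i : σ => (fun r : Fin d => A r (i : Fin n))) ∧
        b ∈ intrinsicInterior ℝ
          (convexHull ℝ ((fun j : Fin n => (fun r : Fin d => A r j)) '' σ))} := by
  classical
  set a : Fin n → Fin d → ℝ := fun j r => A r j with ha
  -- mulVec as a sum of columns
  have hmul : ∀ p : Fin n → ℝ, A.mulVec p = ∑ j, p j • a j := by
    intro p
    funext r
    rw [Finset.sum_apply]
    simp [Matrix.mulVec, dotProduct, ha, mul_comm]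
  -- evaluating a column sum at the first coordinate gives the sum of coefficients
  have hfirstsum : ∀ p : Fin n → ℝ, (∑ j, p j • a j) ⟨0, hd⟩ = ∑ j, p j := by
    intro p
    rw [Finset.sum_apply]
    simp [ha, hfirst]
  -- column sums of functions supported on σ
  have hsupp_sum : ∀ (σ : Set (Fin n)) (p : Fin n → ℝ), (∀ i ∉ σ, p i = 0) →
      colComb a σ (fun i : σ => p ↑i) = ∑ j, p j • a j := by
    intro σ p hp
    rw [colComb_apply]
    exact sum_coe_eq_sum' σ (fun j => p j • a j) (fun i hi => by simp [hp i hi])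
  -- injectivity on vectors supported on σ, for σ with linearly independent columns
  have key_inj : ∀ (σ : Set (Fin n)), LinearIndependent ℝ (fun i : σ => a ↑i) →
      ∀ c : Fin n → ℝ, (∀ i ∉ σ, c i = 0) → (∑ j, c j • a j) = 0 → c = 0 := by
    intro σ hli c hc hsum
    have h0 : colComb a σ (fun i : σ => c ↑i) = 0 := by rw [hsupp_sum σ c hc, hsum]
    have hinj := LinearMap.ker_eq_bot.1 (colComb_inj a hli)
    have h1 : (fun i : σ => c ↑i) = (0 : ↥σ → ℝ) := hinj (by rw [h0, map_zero])
    funext i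
    by_cases hi : i ∈ σ
    · exact congrFun h1 ⟨i, hi⟩
    · exact hc i hi
  -- membership in Qb unfolded
  have hQb' : ∀ p : Fin n → ℝ, p ∈ Qb ↔
      (∀ i, 0 ≤ p i) ∧ ∑ i, p i = 1 ∧ A.mulVec p = b := by
    intro p; rw [hQb]; simp [simplex, and_assoc]
  -- Claim B backward: membership + linear independence on a superset of the support
  -- implies extremality
  have claimBbwd : ∀ v ∈ Qb, ∀ σ : Set (Fin n), Function.support v ⊆ σ →
      LinearIndependent ℝ (fun i : σ => a ↑i) → v ∈ Set.extremePoints ℝ Qb := by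
    intro v hv σ hsub hli
    refine ⟨hv, ?_⟩
    rintro x hx y hy ⟨t1, t2, ht1, ht2, ht12, hxy⟩
    obtain ⟨hv0, hv1, hvb⟩ := (hQb' v).1 hv
    obtain ⟨hx0, hx1, hxb⟩ := (hQb' x).1 hx
    obtain ⟨hy0, hy1, hyb⟩ := (hQb' y).1 hy
    have hzero : ∀ i ∉ σ, x i = 0 ∧ y i = 0 := by
      intro i hi
      have hvi : v i = 0 := Function.notMem_support.1 (fun h => hi (hsub h))
      have h := congrFun hxy i
      simp only [Pi.add_apply, Pi.smul_apply, smul_eq_mul] at h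
      rw [hvi] at h
      have h1 : t1 * x i = 0 := by
        linarith [mul_nonneg ht1.le (hx0 i), mul_nonneg ht2.le (hy0 i)]
      have h2 : t2 * y i = 0 := by
        linarith [mul_nonneg ht1.le (hx0 i), mul_nonneg ht2.le (hy0 i)]
      constructor
      · rcases mul_eq_zero.1 h1 with h' | h'
        · exact absurd h' (ne_of_gt ht1)
        · exact h'
      · rcases mul_eq_zero.1 h2 with h' | h'
        · exact absurd h' (ne_of_gt ht2)
        · exact h' 
    have hxv : x = v := by
      have hcx : ∀ i ∉ σ, (x - v) i = 0 := by
        intro i hi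
        have hvi : v i = 0 := Function.notMem_support.1 (fun h => hi (hsub h))
        simp [(hzero i hi).1, hvi]
      have hsum0 : ∑ j, (x - v) j • a j = 0 := by
        have : ∑ j, (x - v) j • a j = (∑ j, x j • a j) - (∑ j, v j • a j) := by
          rw [← Finset.sum_sub_distrib]
          congr 1; funext j; rw [Pi.sub_apply, sub_smul]
        rw [this, ← hmul, ← hmul, hxb, hvb, sub_self]
      have h4 := key_inj σ hli (x - v) hcx hsum0
      funext i
      have h5 := congrFun h4 i
      simp only [Pi.sub_apply, Pi.zero_apply, sub_eq_zero] at h5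
      exact h5
    exact hxv
  -- Claim B forward: extreme points have linearly independent support columns
  have claimBfwd : ∀ v ∈ Set.extremePoints ℝ Qb,
      LinearIndependent ℝ (fun i : (Function.support v) => a ↑i) := by
    intro v hv
    obtain ⟨hvQ, hvext⟩ := hv
    obtain ⟨hv0, hv1, hvb⟩ := (hQb' v).1 hvQ
    set σ := Function.support v with hσ
    by_contra hnli
    rw [Fintype.not_linearIndependent_iff] at hnli
    obtain ⟨g, hg0, i1, hi1⟩ := hnli
    set c : Fin n → ℝ := fun j => if h : j ∈ σ then g ⟨j, h⟩ else 0 with hc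
    have hcs : ∀ i ∉ σ, c i = 0 := fun i hi => dif_neg hi
    have hcc : ∀ i : σ, c ↑i = g i := by
      intro i
      show (if h : (i : Fin n) ∈ σ then g ⟨↑i, h⟩ else 0) = g i
      rw [dif_pos i.2]
    have hcsum0 : ∑ j, c j • a j = 0 := by
      rw [← hsupp_sum σ c hcs]
      rw [show (fun i : σ => c ↑i) = g from funext hcc]
      rw [colComb_apply]
      exact hg0
    have hcsc : ∑ j, c j = 0 := by
      rw [← hfirstsum c, hcsum0]
      rfl
    have habs : ∀ j, |c j| ≤ ∑ j', |c j'| := fun j =>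
      Finset.single_le_sum (fun j' _ => abs_nonneg (c j')) (Finset.mem_univ j)
    set M := ∑ j', |c j'| with hM
    have hM0 : 0 ≤ M := Finset.sum_nonneg fun j _ => abs_nonneg (c j)
    have htne : σ.toFinset.Nonempty := ⟨↑i1, by simp [Set.mem_toFinset, i1.2]⟩
    set m := σ.toFinset.inf' htne v with hm
    have hm0 : 0 < m := by
      rw [hm, Finset.lt_inf'_iff]
      intro i hi
      have hi' : i ∈ σ := Set.mem_toFinset.1 hi
      exact lt_of_le_of_ne (hv0 i) (Ne.symm hi')
    set ε := m / (M + 1) with hε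
    have hε0 : 0 < ε := by positivity
    have hεM : ε * (M + 1) = m := by
      rw [hε]; field_simp
    have hbound : ∀ j ∈ σ, 0 ≤ v j + ε * c j ∧ 0 ≤ v j - ε * c j := by
      intro j hj
      have h1 : ε * |c j| ≤ ε * M := mul_le_mul_of_nonneg_left (habs j) hε0.le
      have h2 : m ≤ v j := Finset.inf'_le v (Set.mem_toFinset.2 hj)
      have h3 : -|c j| ≤ c j := neg_abs_le (c j)
      have h4 : c j ≤ |c j| := le_abs_self (c j)
      have h5 : ε * -|c j| ≤ ε * c j := mul_le_mul_of_nonneg_left h3 hε0.le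
      have h6 : ε * c j ≤ ε * |c j| := mul_le_mul_of_nonneg_left h4 hε0.le
      constructor <;> nlinarith
    have hzero : ∀ j, j ∉ σ → v j = 0 ∧ c j = 0 := by
      intro j hj
      exact ⟨Function.notMem_support.1 hj, hcs j hj⟩
    set x := v + ε • c with hx
    set y := v - ε • c with hy
    have hmemQ : ∀ (s : ℝ), (∀ j, 0 ≤ v j + s * c j) → v + s • c ∈ Qb := by
      intro s hs
      rw [hQb']
      refine ⟨?_, ?_, ?_⟩
      · intro i
        simpa using hs i
      · have : ∑ i, (v + s • c) i = (∑ i, v i) + s * ∑ i, c i := by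
          rw [Finset.mul_sum, ← Finset.sum_add_distrib]
          congr 1
        rw [this, hcsc, hv1]; ring
      · rw [hmul]
        have : ∑ j, (v + s • c) j • a j
            = (∑ j, v j • a j) + s • (∑ j, c j • a j) := by
          rw [Finset.smul_sum, ← Finset.sum_add_distrib]
          congr 1; funext j
          simp only [Pi.add_apply, Pi.smul_apply, smul_eq_mul]
          rw [add_smul, smul_smul]
        rw [this, hcsum0, smul_zero, add_zero, ← hmul, hvb]
    have hxQ : x ∈ Qb := by
      apply hmemQ
      intro j
      by_cases hj : j ∈ σ
      · exact (hbound j hj).1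
      · simp [(hzero j hj).1, (hzero j hj).2]
    have hyQ : y ∈ Qb := by
      rw [hy, sub_eq_add_neg, ← neg_smul]
      apply hmemQ
      intro j
      by_cases hj : j ∈ σ
      · have := (hbound j hj).2
        linarith [this]
      · simp [(hzero j hj).1, (hzero j hj).2]
    have hseg : v ∈ openSegment ℝ x y := by
      refine ⟨1/2, 1/2, by norm_num, by norm_num, by norm_num, ?_⟩
      funext i
      simp only [hx, hy, Pi.add_apply, Pi.sub_apply, Pi.smul_apply, smul_eq_mul]
      ring
    have hxv := hvext hxQ hyQ hseg
    have : ε * c ↑i1 = 0 := by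
      have h := congrFun hxv ↑i1
      simp only [hx, Pi.add_apply, Pi.smul_apply, smul_eq_mul] at h
      linarith
    have hc0 : c ↑i1 = 0 := by
      rcases mul_eq_zero.1 this with h | h
      · exact absurd h (ne_of_gt hε0)
      · exact h
    rw [hcc i1] at hc0
    exact hi1 hc0
  refine ⟨?_, ?_, ?_⟩
  · -- MapsTo
    intro v hv
    have hli := claimBfwd v hv
    obtain ⟨hv0, hv1, hvb⟩ := (hQb' v).1 hv.1
    refine ⟨hli, ?_⟩
    have hvs : ∀ i ∉ Function.support v, v i = 0 := fun i hi => Function.notMem_support.1 hi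
    have hvpos : ∀ i : (Function.support v), 0 < v ↑i := by
      intro i
      exact lt_of_le_of_ne (hv0 ↑i) (Ne.symm i.2)
    have hsum : ∑ i : (Function.support v), v ↑i = 1 := by
      rw [sum_coe_eq_sum' _ v hvs, hv1]
    have hcomb : colComb a (Function.support v) (fun i => v ↑i) = b := by
      rw [hsupp_sum _ v hvs, ← hmul, hvb]
    exact mem_intrinsic_of_pos_weights a hli _ hvpos hsum hcomb
  · -- InjOn
    intro v1 h1 v2 h2 he
    have he' : Function.support v1 = Function.support v2 := he
    have hli := claimBfwd v1 h1
    obtain ⟨hx0, hx1, hxb⟩ := (hQb' v1).1 h1.1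
    obtain ⟨hy0, hy1, hyb⟩ := (hQb' v2).1 h2.1
    have hcz : ∀ i ∉ Function.support v1, (v1 - v2) i = 0 := by
      intro i hi
      have h1' : v1 i = 0 := Function.notMem_support.1 hi
      have h2' : v2 i = 0 := Function.notMem_support.1 (he' ▸ hi)
      simp [h1', h2']
    have hsum0 : ∑ j, (v1 - v2) j • a j = 0 := by
      have : ∑ j, (v1 - v2) j • a j = (∑ j, v1 j • a j) - (∑ j, v2 j • a j) := by
        rw [← Finset.sum_sub_distrib]
        congr 1; funext j; rw [Pi.sub_apply, sub_smul]
      rw [this, ← hmul, ← hmul, hxb, hyb, sub_self]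
    exact sub_eq_zero.1 (key_inj _ hli _ hcz hsum0)
  · -- SurjOn
    intro σ hσ
    obtain ⟨hli, hbi⟩ := hσ
    have hli' : LinearIndependent ℝ (fun i : σ => a ↑i) := hli
    obtain ⟨u, hupos, husum, hub⟩ := pos_weights_of_mem_intrinsic a hli' hbi
    set w : Fin n → ℝ := fun j => if h : j ∈ σ then u ⟨j, h⟩ else 0 with hw
    have hw0 : ∀ i ∉ σ, w i = 0 := fun i hi => dif_neg hi
    have hwc : ∀ i : σ, w ↑i = u i := by
      intro i
      show (if h : (i : Fin n) ∈ σ then u ⟨↑i, h⟩ else 0) = u i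
      rw [dif_pos i.2]
    have hwsupp : Function.support w = σ := by
      ext i
      simp only [Function.mem_support]
      constructor
      · intro h
        by_contra hi
        exact h (hw0 i hi)
      · intro hi
        show (if h : i ∈ σ then u ⟨i, h⟩ else 0) ≠ 0
        rw [dif_pos hi]
        exact ne_of_gt (hupos ⟨i, hi⟩)
    have hwQ : w ∈ Qb := by
      rw [hQb']
      refine ⟨?_, ?_, ?_⟩
      · intro i
        by_cases hi : i ∈ σ
        · rw [show w i = u ⟨i, hi⟩ from hwc ⟨i, hi⟩]
          exact (hupos _).le
        · rw [hw0 i hi]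
      · rw [← sum_coe_eq_sum' σ w hw0]
        rw [Finset.sum_congr rfl (fun i _ => hwc i)]
        exact husum
      · rw [hmul, ← hsupp_sum σ w hw0]
        rw [show (fun i : σ => w ↑i) = u from funext hwc]
        exact hub
    exact ⟨w, claimBbwd w hwQ σ (by rw [hwsupp]) hli', hwsupp⟩
end

section
/- Let (α, S, β) be a reducible decomposition of the facet family 𝓕, let ψ : ℝ^R → ℝ^{R_α} × ℝ^{R_β} be the linear map sending u to the pair (u_α, u_β) of its α- and β-marginals, and let q ∈ M_𝓕. Then Q_q = ( P + ker ψ ) ∩ Δ_R, where P = { u : R → ℝ : there exist v ∈ Q^α_{q_α} and w ∈ Q^β_{q_β} with u_x = v(x_α)·w(x_β)/q_S(x_S) for all x ∈ R } and + denotes Minkowski sum. (Every q ∈ M_𝓕 has strictly positive entries, so q_S is strictly positive.) -/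
open scoped BigOperators Pointwise

attribute [local instance] Classical.propDecidable

/-- The `F`-marginal of a function on the full state space `∀ i, Fin (d i)`. -/
noncomputable def margF {m : ℕ} (d : Fin m → ℕ) (F : Finset (Fin m))
    (p : (∀ i, Fin (d i)) → ℝ) : ((i : {j // j ∈ F}) → Fin (d i.1)) → ℝ :=
  fun y => ∑ x : ∀ i, Fin (d i), if (∀ i : {j // j ∈ F}, x i.1 = y i) then p x else 0

/-- The `F`-marginal of a function on the partial state space indexed by `α` (meant for
`F ⊆ α`; indices of `F` outside `α` are ignored). -/
noncomputable def margSub {m : ℕ} (d : Fin m → ℕ) (α F : Finset (Fin m))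
    (u : ((i : {j // j ∈ α}) → Fin (d i.1)) → ℝ) :
    ((i : {j // j ∈ F}) → Fin (d i.1)) → ℝ :=
  fun y => ∑ xa : (i : {j // j ∈ α}) → Fin (d i.1),
    if (∀ (i : Fin m) (hiF : i ∈ F) (hia : i ∈ α), xa ⟨i, hia⟩ = y ⟨i, hiF⟩)
      then u xa else 0

/-- The hierarchical log-linear model with facet family `𝓕` on the full state space. -/
noncomputable def hierModel {m : ℕ} (d : Fin m → ℕ) (𝓕 : Finset (Finset (Fin m))) :
    Set ((∀ i, Fin (d i)) → ℝ) :=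
  {p | p ∈ simplex (∀ i, Fin (d i)) ∧
    ∃ θ : (F : {F // F ∈ 𝓕}) → (((i : {j // j ∈ F.1}) → Fin (d i.1)) → ℝ),
      (∀ F y, 0 < θ F y) ∧ ∃ Z : ℝ, 0 < Z ∧
        ∀ x, p x = (1 / Z) * ∏ F : {F // F ∈ 𝓕}, θ F (fun i => x i.1)}

/-- The hierarchical log-linear model on the partial state space indexed by `α`, for a facet
family `𝓕'` all of whose members are contained in `α`. -/
noncomputable def hierModelSub {m : ℕ} (d : Fin m → ℕ) (α : Finset (Fin m))
    (𝓕' : Finset (Finset (Fin m))) (h : ∀ F ∈ 𝓕', F ⊆ α) :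
    Set (((i : {j // j ∈ α}) → Fin (d i.1)) → ℝ) :=
  {p | p ∈ simplex ((i : {j // j ∈ α}) → Fin (d i.1)) ∧
    ∃ θ : (F : {F // F ∈ 𝓕'}) → (((i : {j // j ∈ F.1}) → Fin (d i.1)) → ℝ),
      (∀ F y, 0 < θ F y) ∧ ∃ Z : ℝ, 0 < Z ∧
        ∀ xa, p xa = (1 / Z) * ∏ F : {F // F ∈ 𝓕'},
          θ F (fun i => xa ⟨i.1, h F.1 F.2 i.2⟩)}

section Helpers

variable {m : ℕ} (d : Fin m → ℕ)

/-- Glue assignments on `P` and `Q` into an assignment on `T`. -/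
noncomputable def glueE (P Q T : Finset (Fin m))
    (hP : ∀ i ∈ P, i ∈ T) (hQ : ∀ i ∈ Q, i ∈ T)
    (hT : ∀ i ∈ T, i ∈ P ∨ i ∈ Q) (hd : ∀ i, i ∈ P → i ∈ Q → False) :
    (((i : {j // j ∈ P}) → Fin (d i.1)) × ((i : {j // j ∈ Q}) → Fin (d i.1))) ≃
      ((i : {j // j ∈ T}) → Fin (d i.1)) where
  toFun ac := fun i => if h : i.1 ∈ P then ac.1 ⟨i.1, h⟩
    else ac.2 ⟨i.1, (hT i.1 i.2).resolve_left h⟩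
  invFun u := (fun i => u ⟨i.1, hP i.1 i.2⟩, fun i => u ⟨i.1, hQ i.1 i.2⟩)
  left_inv := by
    rintro ⟨a, c⟩
    refine Prod.ext ?_ ?_ <;> funext i
    · exact dif_pos i.2
    · exact dif_neg (fun h => hd i.1 h i.2)
  right_inv := by
    intro u
    funext i
    dsimp only
    split <;> rfl

/-- Glue an assignment on `A` and one on `Aᶜ` into a full assignment. -/
noncomputable def glueFullE (A : Finset (Fin m)) :
    (((i : {j // j ∈ A}) → Fin (d i.1)) × ((i : {j // j ∈ Aᶜ}) → Fin (d i.1))) ≃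
      (∀ i, Fin (d i)) where
  toFun ac := fun i => if h : i ∈ A then ac.1 ⟨i, h⟩ else ac.2 ⟨i, Finset.mem_compl.2 h⟩
  invFun x := (fun i => x i.1, fun i => x i.1)
  left_inv := by
    rintro ⟨a, c⟩
    refine Prod.ext ?_ ?_ <;> funext i
    · exact dif_pos i.2
    · exact dif_neg (Finset.mem_compl.1 i.2)
  right_inv := by
    intro x
    funext i
    dsimp only
    split <;> rfl

end Helpers
section Helpers2

variable {m : ℕ} (d : Fin m → ℕ)

lemma glueFullE_left (A : Finset (Fin m)) (a : (i : {j // j ∈ A}) → Fin (d i.1))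
    (c : (i : {j // j ∈ Aᶜ}) → Fin (d i.1)) {i : Fin m} (hi : i ∈ A) :
    glueFullE d A (a, c) i = a ⟨i, hi⟩ := dif_pos hi

lemma glueFullE_right (A : Finset (Fin m)) (a : (i : {j // j ∈ A}) → Fin (d i.1))
    (c : (i : {j // j ∈ Aᶜ}) → Fin (d i.1)) {i : Fin m} (hi : i ∉ A) :
    glueFullE d A (a, c) i = c ⟨i, Finset.mem_compl.2 hi⟩ := dif_neg hi

lemma glueE_left (P Q T : Finset (Fin m)) (hP : ∀ i ∈ P, i ∈ T) (hQ : ∀ i ∈ Q, i ∈ T)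
    (hT : ∀ i ∈ T, i ∈ P ∨ i ∈ Q) (hd : ∀ i, i ∈ P → i ∈ Q → False)
    (a : (i : {j // j ∈ P}) → Fin (d i.1)) (c : (i : {j // j ∈ Q}) → Fin (d i.1))
    {i : {j // j ∈ T}} (hi : i.1 ∈ P) :
    glueE d P Q T hP hQ hT hd (a, c) i = a ⟨i.1, hi⟩ := dif_pos hi

lemma glueE_right (P Q T : Finset (Fin m)) (hP : ∀ i ∈ P, i ∈ T) (hQ : ∀ i ∈ Q, i ∈ T)
    (hT : ∀ i ∈ T, i ∈ P ∨ i ∈ Q) (hd : ∀ i, i ∈ P → i ∈ Q → False)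
    (a : (i : {j // j ∈ P}) → Fin (d i.1)) (c : (i : {j // j ∈ Q}) → Fin (d i.1))
    {i : {j // j ∈ T}} (hi : i.1 ∉ P) (hq : i.1 ∈ Q) :
    glueE d P Q T hP hQ hT hd (a, c) i = c ⟨i.1, hq⟩ := dif_neg hi

/-- Marginalizing a full marginal further: for `F ⊆ A`,
`margSub A F (margF A p) = margF F p`. -/
lemma margSub_margF (A F : Finset (Fin m)) (hFA : F ⊆ A) (p : (∀ i, Fin (d i)) → ℝ) :
    margSub d A F (margF d A p) = margF d F p := by
  funext y
  unfold margSub margF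
  calc
    (∑ xa : (i : {j // j ∈ A}) → Fin (d i.1),
        if (∀ (i : Fin m) (hiF : i ∈ F) (hia : i ∈ A), xa ⟨i, hia⟩ = y ⟨i, hiF⟩) then
          (∑ x : ∀ i, Fin (d i), if (∀ i : {j // j ∈ A}, x i.1 = xa i) then p x else 0)
        else 0)
      = ∑ xa : (i : {j // j ∈ A}) → Fin (d i.1), ∑ x : ∀ i, Fin (d i),
          (if ((∀ (i : Fin m) (hiF : i ∈ F) (hia : i ∈ A), xa ⟨i, hia⟩ = y ⟨i, hiF⟩) ∧
              (∀ i : {j // j ∈ A}, x i.1 = xa i)) then p x else 0) := by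
        refine Fintype.sum_congr _ _ (fun xa => ?_)
        split_ifs with h
        · exact Finset.sum_congr rfl fun x _ => (if_congr (and_iff_right h) rfl rfl).symm
        · exact (Finset.sum_eq_zero fun x _ => if_neg (fun hc => h hc.1)).symm
    _ = ∑ x : ∀ i, Fin (d i), ∑ xa : (i : {j // j ∈ A}) → Fin (d i.1),
          (if ((∀ (i : Fin m) (hiF : i ∈ F) (hia : i ∈ A), xa ⟨i, hia⟩ = y ⟨i, hiF⟩) ∧
              (∀ i : {j // j ∈ A}, x i.1 = xa i)) then p x else 0) := Finset.sum_comm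
    _ = ∑ x : ∀ i, Fin (d i), (if (∀ i : {j // j ∈ F}, x i.1 = y i) then p x else 0) := by
        refine Fintype.sum_congr _ _ (fun x => ?_)
        rw [Fintype.sum_eq_single (fun i : {j // j ∈ A} => x i.1)]
        · refine if_congr ?_ rfl rfl
          constructor
          · rintro ⟨h1, -⟩ i
            exact h1 i.1 i.2 (hFA i.2)
          · exact fun hc => ⟨fun i hiF hia => hc ⟨i, hiF⟩, fun i => rfl⟩
        · intro xa hxa
          exact if_neg (fun hc => hxa (funext fun i => (hc.2 i).symm))

/-- Representation of a smaller margSub as a marginal of a bigger one. -/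
lemma margSub_rep (A F Sx : Finset (Fin m)) (hSF : Sx ⊆ F) (hFA : F ⊆ A)
    (u : ((i : {j // j ∈ A}) → Fin (d i.1)) → ℝ) :
    margSub d A Sx u = fun ys => ∑ z : (i : {j // j ∈ F}) → Fin (d i.1),
      if (∀ i : {j // j ∈ Sx}, z ⟨i.1, hSF i.2⟩ = ys i) then margSub d A F u z else 0 := by
  funext ys
  unfold margSub
  symm
  calc
    (∑ z : (i : {j // j ∈ F}) → Fin (d i.1),
        if (∀ i : {j // j ∈ Sx}, z ⟨i.1, hSF i.2⟩ = ys i) then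
          (∑ xa : (i : {j // j ∈ A}) → Fin (d i.1),
            if (∀ (i : Fin m) (hiF : i ∈ F) (hia : i ∈ A), xa ⟨i, hia⟩ = z ⟨i, hiF⟩)
              then u xa else 0)
        else 0)
      = ∑ z : (i : {j // j ∈ F}) → Fin (d i.1), ∑ xa : (i : {j // j ∈ A}) → Fin (d i.1),
          (if ((∀ i : {j // j ∈ Sx}, z ⟨i.1, hSF i.2⟩ = ys i) ∧
              (∀ (i : Fin m) (hiF : i ∈ F) (hia : i ∈ A), xa ⟨i, hia⟩ = z ⟨i, hiF⟩))
            then u xa else 0) := by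
        refine Fintype.sum_congr _ _ (fun z => ?_)
        split_ifs with h
        · exact Finset.sum_congr rfl fun xa _ => (if_congr (and_iff_right h) rfl rfl).symm
        · exact (Finset.sum_eq_zero fun xa _ => if_neg (fun hc => h hc.1)).symm
    _ = ∑ xa : (i : {j // j ∈ A}) → Fin (d i.1), ∑ z : (i : {j // j ∈ F}) → Fin (d i.1),
          (if ((∀ i : {j // j ∈ Sx}, z ⟨i.1, hSF i.2⟩ = ys i) ∧
              (∀ (i : Fin m) (hiF : i ∈ F) (hia : i ∈ A), xa ⟨i, hia⟩ = z ⟨i, hiF⟩))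
            then u xa else 0) := Finset.sum_comm
    _ = ∑ xa : (i : {j // j ∈ A}) → Fin (d i.1),
          (if (∀ (i : Fin m) (hiS : i ∈ Sx) (hia : i ∈ A), xa ⟨i, hia⟩ = ys ⟨i, hiS⟩)
            then u xa else 0) := by
        refine Fintype.sum_congr _ _ (fun xa => ?_)
        rw [Fintype.sum_eq_single (fun i : {j // j ∈ F} => xa ⟨i.1, hFA i.2⟩)]
        · refine if_congr ?_ rfl rfl
          constructor
          · rintro ⟨h1, -⟩ i hiS hia
            exact h1 ⟨i, hiS⟩
          · exact fun hc => ⟨fun i => hc i.1 i.2 (hFA (hSF i.2)), fun i hiF hia => rfl⟩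
        · intro z hz
          exact if_neg (fun hc => hz (funext fun i => (hc.2 i.1 i.2 (hFA i.2)).symm))

lemma margSub_mono_eq (A F Sx : Finset (Fin m)) (hSF : Sx ⊆ F) (hFA : F ⊆ A)
    (u u' : ((i : {j // j ∈ A}) → Fin (d i.1)) → ℝ)
    (h : margSub d A F u = margSub d A F u') :
    margSub d A Sx u = margSub d A Sx u' := by
  rw [margSub_rep d A F Sx hSF hFA u, margSub_rep d A F Sx hSF hFA u', h]

end Helpers2
section Helpers3

variable {m : ℕ} (d : Fin m → ℕ)

lemma margF_add (F : Finset (Fin m)) (u v : (∀ i, Fin (d i)) → ℝ) :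
    margF d F (u + v) = margF d F u + margF d F v := by
  funext y
  unfold margF
  rw [Pi.add_apply, ← Finset.sum_add_distrib]
  refine Fintype.sum_congr _ _ (fun x => ?_)
  split_ifs <;> simp

lemma margF_sub (F : Finset (Fin m)) (u v : (∀ i, Fin (d i)) → ℝ) :
    margF d F (u - v) = margF d F u - margF d F v := by
  funext y
  unfold margF
  rw [Pi.sub_apply, ← Finset.sum_sub_distrib]
  refine Fintype.sum_congr _ _ (fun x => ?_)
  split_ifs <;> simp

lemma margSub_zero (A F : Finset (Fin m)) :
    margSub d A F (0 : ((i : {j // j ∈ A}) → Fin (d i.1)) → ℝ) = 0 := by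
  funext y
  unfold margSub
  simp

lemma margF_simplex (F : Finset (Fin m)) (u : (∀ i, Fin (d i)) → ℝ)
    (hu : u ∈ simplex (∀ i, Fin (d i))) :
    margF d F u ∈ simplex ((i : {j // j ∈ F}) → Fin (d i.1)) := by
  constructor
  · intro y
    unfold margF
    refine Finset.sum_nonneg fun x _ => ?_
    split_ifs
    exacts [hu.1 x, le_rfl]
  · have key : ∀ x : ∀ i, Fin (d i),
        (∑ y : (i : {j // j ∈ F}) → Fin (d i.1),
          if (∀ i : {j // j ∈ F}, x i.1 = y i) then u x else 0) = u x := by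
      intro x
      rw [Fintype.sum_eq_single (fun i : {j // j ∈ F} => x i.1)]
      · exact if_pos fun i => rfl
      · intro y hy
        exact if_neg (fun hc => hy (funext fun i => (hc i).symm))
    calc
      ∑ y : (i : {j // j ∈ F}) → Fin (d i.1), margF d F u y
        = ∑ y : (i : {j // j ∈ F}) → Fin (d i.1), ∑ x : ∀ i, Fin (d i),
            (if (∀ i : {j // j ∈ F}, x i.1 = y i) then u x else 0) := rfl
      _ = ∑ x : ∀ i, Fin (d i), ∑ y : (i : {j // j ∈ F}) → Fin (d i.1),
            (if (∀ i : {j // j ∈ F}, x i.1 = y i) then u x else 0) := Finset.sum_comm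
      _ = ∑ x : ∀ i, Fin (d i), u x := Fintype.sum_congr _ _ key
      _ = 1 := hu.2

lemma hier_pos (𝓕 : Finset (Finset (Fin m))) (q : (∀ i, Fin (d i)) → ℝ)
    (hq : q ∈ hierModel d 𝓕) : ∀ x, 0 < q x := by
  obtain ⟨hs, θ, hθ, Z, hZ, hrep⟩ := hq
  intro x
  rw [hrep]
  exact mul_pos (by positivity) (Finset.prod_pos fun F _ => hθ _ _)

lemma hier_nonempty (𝓕 : Finset (Finset (Fin m))) (q : (∀ i, Fin (d i)) → ℝ)
    (hq : q ∈ hierModel d 𝓕) : Nonempty (∀ i, Fin (d i)) := by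
  by_contra h
  rw [not_nonempty_iff] at h
  have := hq.1.2
  rw [Finset.univ_eq_empty, Finset.sum_empty] at this
  exact zero_ne_one this

lemma margF_pos (𝓕 : Finset (Finset (Fin m))) (F : Finset (Fin m))
    (q : (∀ i, Fin (d i)) → ℝ) (hq : q ∈ hierModel d 𝓕) :
    ∀ y, 0 < margF d F q y := by
  intro y
  obtain ⟨x⟩ := hier_nonempty d 𝓕 q hq
  unfold margF
  refine Finset.sum_pos' (fun x' _ => ?_) ?_
  · split_ifs
    exacts [(hier_pos d 𝓕 q hq x').le, le_rfl]
  · refine ⟨glueFullE d F (y, fun i => x i.1), Finset.mem_univ _, ?_⟩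
    rw [if_pos fun i => glueFullE_left d F y _ i.2]
    exact hier_pos d 𝓕 q hq _

end Helpers3
section Helpers4

variable {m : ℕ} (d : Fin m → ℕ)

/-- Core computation: the `A`-marginal of `x ↦ f(x_A)·g(x_B)·h(x_S)` where `A ∪ B` is
everything and `S = A ∩ B`. -/
lemma margF_prod_split (A B Sx : Finset (Fin m))
    (hU : ∀ i : Fin m, i ∈ A ∨ i ∈ B)
    (hSx : ∀ i : Fin m, i ∈ Sx ↔ i ∈ A ∧ i ∈ B)
    (f : ((i : {j // j ∈ A}) → Fin (d i.1)) → ℝ)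
    (g : ((i : {j // j ∈ B}) → Fin (d i.1)) → ℝ)
    (h : ((i : {j // j ∈ Sx}) → Fin (d i.1)) → ℝ) :
    margF d A (fun x => f (fun i => x i.1) * g (fun i => x i.1) * h (fun i => x i.1)) =
      fun y => f y * margSub d B Sx g (fun i => y ⟨i.1, ((hSx i.1).1 i.2).1⟩) *
        h (fun i => y ⟨i.1, ((hSx i.1).1 i.2).1⟩) := by
  have hPB : ∀ i ∈ Sx, i ∈ B := fun i hi => ((hSx i).1 hi).2
  have hQB : ∀ i ∈ Aᶜ, i ∈ B := fun i hi => (hU i).resolve_left (Finset.mem_compl.1 hi)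
  have hTB : ∀ i ∈ B, i ∈ Sx ∨ i ∈ Aᶜ := by
    intro i hi
    by_cases hA : i ∈ A
    · exact Or.inl ((hSx i).2 ⟨hA, hi⟩)
    · exact Or.inr (Finset.mem_compl.2 hA)
  have hdB : ∀ i, i ∈ Sx → i ∈ Aᶜ → False :=
    fun i h1 h2 => Finset.mem_compl.1 h2 ((hSx i).1 h1).1
  set E1 := glueFullE d A with hE1
  set E2 := glueE d Sx Aᶜ B hPB hQB hTB hdB with hE2
  funext y
  set ys : (i : {j // j ∈ Sx}) → Fin (d i.1) := fun i => y ⟨i.1, ((hSx i.1).1 i.2).1⟩ with hys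
  -- the restriction of the glued point to `B` is the glued restriction
  have key : ∀ c : (i : {j // j ∈ Aᶜ}) → Fin (d i.1),
      (fun i : {j // j ∈ B} => E1 (y, c) i.1) = E2 (ys, c) := by
    intro c
    funext i
    by_cases hA : i.1 ∈ A
    · have hiS : i.1 ∈ Sx := (hSx i.1).2 ⟨hA, i.2⟩
      rw [glueFullE_left d A y c hA, glueE_left d Sx Aᶜ B hPB hQB hTB hdB ys c hiS]
    · have hiS : i.1 ∉ Sx := fun hS => hA ((hSx i.1).1 hS).1
      rw [glueFullE_right d A y c hA,
        glueE_right d Sx Aᶜ B hPB hQB hTB hdB ys c hiS (Finset.mem_compl.2 hA)]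
  -- computing margSub over B via the glue decomposition
  have claim2 : margSub d B Sx g ys = ∑ c : (i : {j // j ∈ Aᶜ}) → Fin (d i.1),
      g (E2 (ys, c)) := by
    unfold margSub
    calc
      (∑ xb : (i : {j // j ∈ B}) → Fin (d i.1),
          if (∀ (i : Fin m) (hiS : i ∈ Sx) (hib : i ∈ B), xb ⟨i, hib⟩ = ys ⟨i, hiS⟩)
            then g xb else 0)
        = ∑ sc : ((i : {j // j ∈ Sx}) → Fin (d i.1)) × ((i : {j // j ∈ Aᶜ}) → Fin (d i.1)),
            (if (∀ (i : Fin m) (hiS : i ∈ Sx) (hib : i ∈ B),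
                E2 sc ⟨i, hib⟩ = ys ⟨i, hiS⟩) then g (E2 sc) else 0) :=
          Fintype.sum_equiv E2.symm _ _ (fun xb => by rw [Equiv.apply_symm_apply])
      _ = ∑ s : (i : {j // j ∈ Sx}) → Fin (d i.1),
            ∑ c : (i : {j // j ∈ Aᶜ}) → Fin (d i.1),
            (if (∀ (i : Fin m) (hiS : i ∈ Sx) (hib : i ∈ B),
                E2 (s, c) ⟨i, hib⟩ = ys ⟨i, hiS⟩) then g (E2 (s, c)) else 0) :=
          Fintype.sum_prod_type _
      _ = ∑ c : (i : {j // j ∈ Aᶜ}) → Fin (d i.1), g (E2 (ys, c)) := by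
          rw [Fintype.sum_eq_single ys]
          · refine Fintype.sum_congr _ _ (fun c => ?_)
            refine if_pos (fun i hiS hib => ?_)
            rw [glueE_left d Sx Aᶜ B hPB hQB hTB hdB ys c hiS]
          · intro s hs
            refine Finset.sum_eq_zero (fun c _ => if_neg (fun hc => hs ?_))
            funext i
            have := hc i.1 i.2 (hPB i.1 i.2)
            rwa [glueE_left d Sx Aᶜ B hPB hQB hTB hdB s c i.2] at this
  rw [claim2]
  show (∑ x : ∀ i, Fin (d i),
      if (∀ i : {j // j ∈ A}, x i.1 = y i)
        then f (fun i => x i.1) * g (fun i => x i.1) * h (fun i => x i.1) else 0) = _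
  calc
    (∑ x : ∀ i, Fin (d i),
        if (∀ i : {j // j ∈ A}, x i.1 = y i)
          then f (fun i => x i.1) * g (fun i => x i.1) * h (fun i => x i.1) else 0)
      = ∑ ac : ((i : {j // j ∈ A}) → Fin (d i.1)) × ((i : {j // j ∈ Aᶜ}) → Fin (d i.1)),
          (if (∀ i : {j // j ∈ A}, E1 ac i.1 = y i)
            then f (fun i => E1 ac i.1) * g (fun i => E1 ac i.1) * h (fun i => E1 ac i.1)
            else 0) :=
        Fintype.sum_equiv E1.symm _ _ (fun x => by rw [Equiv.apply_symm_apply])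
    _ = ∑ a : (i : {j // j ∈ A}) → Fin (d i.1), ∑ c : (i : {j // j ∈ Aᶜ}) → Fin (d i.1),
          (if (∀ i : {j // j ∈ A}, E1 (a, c) i.1 = y i)
            then f (fun i => E1 (a, c) i.1) * g (fun i => E1 (a, c) i.1) *
              h (fun i => E1 (a, c) i.1) else 0) := Fintype.sum_prod_type _
    _ = ∑ c : (i : {j // j ∈ Aᶜ}) → Fin (d i.1),
          (if (∀ i : {j // j ∈ A}, E1 (y, c) i.1 = y i)
            then f (fun i => E1 (y, c) i.1) * g (fun i => E1 (y, c) i.1) *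
              h (fun i => E1 (y, c) i.1) else 0) := by
        rw [Fintype.sum_eq_single y]
        intro a ha
        refine Finset.sum_eq_zero (fun c _ => if_neg (fun hc => ha ?_))
        funext i
        have := hc i
        rwa [glueFullE_left d A a c i.2] at this
    _ = ∑ c : (i : {j // j ∈ Aᶜ}) → Fin (d i.1), f y * g (E2 (ys, c)) * h ys := by
        refine Fintype.sum_congr _ _ (fun c => ?_)
        rw [if_pos (fun i => glueFullE_left d A y c i.2)]
        congr 1
        · congr 1
          · congr 1
            exact funext fun i => glueFullE_left d A y c i.2
          · rw [key c]
        · exact congrArg h (funext fun i => glueFullE_left d A y c ((hSx i.1).1 i.2).1)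
    _ = f y * (∑ c : (i : {j // j ∈ Aᶜ}) → Fin (d i.1), g (E2 (ys, c))) * h ys := by
        rw [Finset.mul_sum, Finset.sum_mul]

end Helpers4
section Helpers5

variable {m : ℕ} (d : Fin m → ℕ)

lemma marg_p_eq (α β : Finset (Fin m)) (hU : ∀ i : Fin m, i ∈ α ∨ i ∈ β)
    (qS : ((i : {j // j ∈ α ∩ β}) → Fin (d i.1)) → ℝ) (hqS : ∀ s, 0 < qS s)
    (v : ((i : {j // j ∈ α}) → Fin (d i.1)) → ℝ)
    (w : ((i : {j // j ∈ β}) → Fin (d i.1)) → ℝ)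
    (hv : margSub d α (α ∩ β) v = qS) (hw : margSub d β (α ∩ β) w = qS) :
    margF d α (fun x => v (fun i => x i.1) * w (fun i => x i.1) / qS (fun i => x i.1)) = v ∧
    margF d β (fun x => v (fun i => x i.1) * w (fun i => x i.1) / qS (fun i => x i.1)) = w := by
  set hinv : ((i : {j // j ∈ α ∩ β}) → Fin (d i.1)) → ℝ := fun s => (qS s)⁻¹ with hhinv
  have hUba : ∀ i : Fin m, i ∈ β ∨ i ∈ α := fun i => (hU i).symm
  have hmem1 : ∀ i : Fin m, i ∈ α ∩ β ↔ i ∈ α ∧ i ∈ β := fun i => Finset.mem_inter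
  have hmem2 : ∀ i : Fin m, i ∈ α ∩ β ↔ i ∈ β ∧ i ∈ α :=
    fun i => Finset.mem_inter.trans and_comm
  constructor
  · have hfun : (fun x : ∀ i, Fin (d i) =>
        v (fun i => x i.1) * w (fun i => x i.1) / qS (fun i => x i.1)) =
        fun x => v (fun i => x i.1) * w (fun i => x i.1) * hinv (fun i => x i.1) :=
      funext fun x => div_eq_mul_inv _ _
    rw [hfun, margF_prod_split d α β (α ∩ β) hU hmem1 v w hinv]
    funext y
    rw [hw, hhinv]
    dsimp only
    rw [mul_assoc, mul_inv_cancel₀ (hqS _).ne', mul_one]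
  · have hfun : (fun x : ∀ i, Fin (d i) =>
        v (fun i => x i.1) * w (fun i => x i.1) / qS (fun i => x i.1)) =
        fun x => w (fun i => x i.1) * v (fun i => x i.1) * hinv (fun i => x i.1) :=
      funext fun x => by rw [hhinv]; dsimp only; rw [div_eq_mul_inv]; ring
    rw [hfun, margF_prod_split d β α (α ∩ β) hUba hmem2 w v hinv]
    funext y
    rw [hv, hhinv]
    dsimp only
    rw [mul_assoc, mul_inv_cancel₀ (hqS _).ne', mul_one]

end Helpers5
/-- decomposition of the logarithmic Voronoi polytope of a reducible hierarchical
model: `Q_q = (P + ker ψ) ∩ Δ_R`, where `P` is built from points of `Q^α_{q_α}` and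
`Q^β_{q_β}` via `u_x = v(x_α)·w(x_β)/q_S(x_S)` and `ker ψ` is the set of vectors with zero
`α`- and `β`-marginals. -/
theorem stmt12 {m : ℕ} (d : Fin m → ℕ) (𝓕 : Finset (Finset (Fin m)))
    (hcov : ∀ i : Fin m, ∃ F ∈ 𝓕, i ∈ F)
    (α β : Finset (Fin m)) (hunion : α ∪ β = Finset.univ)
    (hsplit : ∀ F ∈ 𝓕, F ⊆ α ∨ F ⊆ β)
    (hS1 : ∃ F ∈ 𝓕, α ∩ β ⊆ F ∧ F ⊆ α)
    (hS2 : ∃ F ∈ 𝓕, α ∩ β ⊆ F ∧ F ⊆ β)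
    (q : (∀ i, Fin (d i)) → ℝ) (hq : q ∈ hierModel d 𝓕) :
    {u | u ∈ simplex (∀ i, Fin (d i)) ∧ ∀ F ∈ 𝓕, margF d F u = margF d F q} =
      ({u : (∀ i, Fin (d i)) → ℝ |
          ∃ (v : ((i : {j // j ∈ α}) → Fin (d i.1)) → ℝ)
            (w : ((i : {j // j ∈ β}) → Fin (d i.1)) → ℝ),
            (v ∈ simplex ((i : {j // j ∈ α}) → Fin (d i.1)) ∧
              ∀ F ∈ 𝓕, F ⊆ α → margSub d α F v = margSub d α F (margF d α q)) ∧
            (w ∈ simplex ((i : {j // j ∈ β}) → Fin (d i.1)) ∧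
              ∀ F ∈ 𝓕, F ⊆ β → margSub d β F w = margSub d β F (margF d β q)) ∧
            ∀ x, u x = v (fun i => x i.1) * w (fun i => x i.1) /
              margF d (α ∩ β) q (fun i => x i.1)} +
        {u : (∀ i, Fin (d i)) → ℝ | margF d α u = 0 ∧ margF d β u = 0}) ∩
      simplex (∀ i, Fin (d i)) := by
  obtain ⟨F1, hF1𝓕, hSF1, hF1α⟩ := hS1
  obtain ⟨F2, hF2𝓕, hSF2, hF2β⟩ := hS2
  have hUab : ∀ i : Fin m, i ∈ α ∨ i ∈ β := fun i =>
    Finset.mem_union.1 (hunion ▸ Finset.mem_univ i)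
  have hSα : α ∩ β ⊆ α := Finset.inter_subset_left
  have hSβ : α ∩ β ⊆ β := Finset.inter_subset_right
  have hqSpos : ∀ s, 0 < margF d (α ∩ β) q s := margF_pos d 𝓕 (α ∩ β) q hq
  ext u
  simp only [Set.mem_setOf_eq, Set.mem_inter_iff, Set.mem_add]
  constructor
  · rintro ⟨huΔ, humarg⟩
    have hvS : margSub d α (α ∩ β) (margF d α u) = margF d (α ∩ β) q := by
      have h1 : margSub d α (α ∩ β) (margF d α u) = margF d (α ∩ β) u :=
        margSub_margF d α (α ∩ β) hSα u
      have h2 : margF d (α ∩ β) u = margF d (α ∩ β) q := by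
        rw [← margSub_margF d F1 (α ∩ β) hSF1 u, ← margSub_margF d F1 (α ∩ β) hSF1 q,
          humarg F1 hF1𝓕]
      rw [h1, h2]
    have hwS : margSub d β (α ∩ β) (margF d β u) = margF d (α ∩ β) q := by
      have h1 : margSub d β (α ∩ β) (margF d β u) = margF d (α ∩ β) u :=
        margSub_margF d β (α ∩ β) hSβ u
      have h2 : margF d (α ∩ β) u = margF d (α ∩ β) q := by
        rw [← margSub_margF d F2 (α ∩ β) hSF2 u, ← margSub_margF d F2 (α ∩ β) hSF2 q,
          humarg F2 hF2𝓕]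
      rw [h1, h2]
    obtain ⟨hpα, hpβ⟩ := marg_p_eq d α β hUab (margF d (α ∩ β) q) hqSpos
      (margF d α u) (margF d β u) hvS hwS
    set p : (∀ i, Fin (d i)) → ℝ := fun x =>
      (margF d α u) (fun i => x i.1) * (margF d β u) (fun i => x i.1) /
        margF d (α ∩ β) q (fun i => x i.1) with hpdef
    refine ⟨⟨p, ⟨margF d α u, margF d β u,
      ⟨margF_simplex d α u huΔ, fun F hF hFα => ?_⟩,
      ⟨margF_simplex d β u huΔ, fun F hF hFβ => ?_⟩, fun x => rfl⟩,
      u - p, ⟨?_, ?_⟩, by abel⟩, huΔ⟩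
    · rw [margSub_margF d α F hFα u, margSub_margF d α F hFα q]
      exact humarg F hF
    · rw [margSub_margF d β F hFβ u, margSub_margF d β F hFβ q]
      exact humarg F hF
    · rw [margF_sub, hpα, sub_self]
    · rw [margF_sub, hpβ, sub_self]
  · rintro ⟨⟨p, hpP, k, hkK, hpk⟩, huΔ⟩
    obtain ⟨v, w, ⟨hvsimp, hvmarg⟩, ⟨hwsimp, hwmarg⟩, hpform⟩ := hpP
    obtain ⟨hkα, hkβ⟩ := hkK
    refine ⟨huΔ, fun F hF => ?_⟩
    have hvS : margSub d α (α ∩ β) v = margF d (α ∩ β) q := by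
      have h1 := margSub_mono_eq d α F1 (α ∩ β) hSF1 hF1α v (margF d α q)
        (hvmarg F1 hF1𝓕 hF1α)
      rw [h1, margSub_margF d α (α ∩ β) hSα q]
    have hwS : margSub d β (α ∩ β) w = margF d (α ∩ β) q := by
      have h1 := margSub_mono_eq d β F2 (α ∩ β) hSF2 hF2β w (margF d β q)
        (hwmarg F2 hF2𝓕 hF2β)
      rw [h1, margSub_margF d β (α ∩ β) hSβ q]
    obtain ⟨hpα, hpβ⟩ := marg_p_eq d α β hUab (margF d (α ∩ β) q) hqSpos v w hvS hwS
    have hp : p = fun x => v (fun i => x i.1) * w (fun i => x i.1) /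
        margF d (α ∩ β) q (fun i => x i.1) := funext hpform
    have hFu : margF d F u = margF d F p + margF d F k := by
      rw [← hpk, margF_add]
    rcases hsplit F hF with hFα | hFβ
    · have h1 : margF d F p = margF d F q := by
        calc margF d F p = margSub d α F (margF d α p) :=
              (margSub_margF d α F hFα p).symm
          _ = margSub d α F v := by rw [hp, hpα]
          _ = margSub d α F (margF d α q) := hvmarg F hF hFα
          _ = margF d F q := margSub_margF d α F hFα q
      have h2 : margF d F k = 0 := by
        rw [← margSub_margF d α F hFα k, hkα, margSub_zero]
      rw [hFu, h1, h2, add_zero]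
    · have h1 : margF d F p = margF d F q := by
        calc margF d F p = margSub d β F (margF d β p) :=
              (margSub_margF d β F hFβ p).symm
          _ = margSub d β F w := by rw [hp, hpβ]
          _ = margSub d β F (margF d β q) := hwmarg F hF hFβ
          _ = margF d F q := margSub_margF d β F hFβ q
      have h2 : margF d F k = 0 := by
        rw [← margSub_margF d β F hFβ k, hkβ, margSub_zero]
      rw [hFu, h1, h2, add_zero]
end

section
/- Let (α, S, β) be a reducible decomposition of the facet family 𝓕, let p ∈ Δ_R have strictly positive S-marginal p_S, and let v ∈ Q^α_{p_α}, w ∈ Q^β_{p_β}. Define u : R → ℝ by u_x = v(x_α)·w(x_β)/p_S(x_S). Then u ∈ Δ_R and D_{M_𝓕}(u) = D_{M_{𝓕_α}}(v) + D_{M_{𝓕_β}}(w). -/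
open scoped BigOperators Pointwise

attribute [local instance] Classical.propDecidable

namespace S13

variable {m : ℕ} {d : Fin m → ℕ}

/-- partial state space -/
abbrev PS (d : Fin m → ℕ) (γ : Finset (Fin m)) := (i : {j // j ∈ γ}) → Fin (d i.1)

def rest (γ : Finset (Fin m)) (x : ∀ i, Fin (d i)) : PS d γ := fun i => x i.1

def rsub {T γ : Finset (Fin m)} (h : T ⊆ γ) (xa : PS d γ) : PS d T :=
  fun i => xa ⟨i.1, h i.2⟩

lemma ite_swap (P Q : Prop) [Decidable P] [Decidable Q] (a : ℝ) :
    (if P then (if Q then a else 0) else 0) = if Q then (if P then a else 0) else 0 := by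
  split_ifs <;> rfl

lemma ite_sum {A : Type*} [Fintype A] (P : Prop) [Decidable P] (f : A → ℝ) :
    (if P then ∑ x, f x else 0) = ∑ x, if P then f x else 0 := by
  split_ifs <;> simp

lemma margF_eq (T : Finset (Fin m)) (p : (∀ i, Fin (d i)) → ℝ) (y : PS d T) :
    margF d T p y = ∑ x : ∀ i, Fin (d i), if rest T x = y then p x else 0 := by
  refine Finset.sum_congr rfl fun x _ => ?_
  refine if_congr ?_ rfl rfl
  constructor
  · intro h; funext i; exact h i
  · intro h i; exact congrFun h i

lemma margSub_eq {T γ : Finset (Fin m)} (h : T ⊆ γ) (a : PS d γ → ℝ) (y : PS d T) :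
    margSub d γ T a y = ∑ xa : PS d γ, if rsub h xa = y then a xa else 0 := by
  refine Finset.sum_congr rfl fun xa _ => ?_
  refine if_congr ?_ rfl rfl
  constructor
  · intro hc; funext i; exact hc i.1 i.2 (h i.2)
  · intro hc i h1 h2; exact congrFun hc ⟨i, h1⟩

lemma margSub_sum {T γ : Finset (Fin m)} (h : T ⊆ γ) (a : PS d γ → ℝ) :
    ∑ y : PS d T, margSub d γ T a y = ∑ xa : PS d γ, a xa := by
  simp only [margSub_eq h]
  rw [Finset.sum_comm]
  refine Finset.sum_congr rfl fun xa _ => ?_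
  simp

lemma margF_sum (T : Finset (Fin m)) (p : (∀ i, Fin (d i)) → ℝ) :
    ∑ y : PS d T, margF d T p y = ∑ x, p x := by
  simp only [margF_eq]
  rw [Finset.sum_comm]
  refine Finset.sum_congr rfl fun x _ => ?_
  simp

lemma push {T γ : Finset (Fin m)} (h : T ⊆ γ) (a : PS d γ → ℝ) (g : PS d T → ℝ) :
    ∑ xa : PS d γ, a xa * g (rsub h xa) = ∑ y : PS d T, margSub d γ T a y * g y := by
  simp only [margSub_eq h, Finset.sum_mul, ite_mul, zero_mul]
  rw [Finset.sum_comm]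
  refine Finset.sum_congr rfl fun xa _ => ?_
  simp

lemma margSub_margSub {T F γ : Finset (Fin m)} (h1 : T ⊆ F) (h2 : F ⊆ γ)
    (a : PS d γ → ℝ) : margSub d F T (margSub d γ F a) = margSub d γ T a := by
  funext y
  simp only [margSub_eq h1, margSub_eq h2, margSub_eq (h1.trans h2)]
  simp only [ite_sum]
  rw [Finset.sum_comm]
  refine Finset.sum_congr rfl fun xa _ => ?_
  rw [Finset.sum_eq_single (rsub h2 xa)]
  · rw [if_pos rfl]; exact if_congr Iff.rfl rfl rfl
  · intro b _ hb; split_ifs with hA hB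
    · exact absurd hB.symm hb
    all_goals rfl
  · intro hmem; exact absurd (Finset.mem_univ _) hmem

lemma margSub_margF {T γ : Finset (Fin m)} (h : T ⊆ γ) (p : (∀ i, Fin (d i)) → ℝ) :
    margSub d γ T (margF d γ p) = margF d T p := by
  funext y
  simp only [margSub_eq h, margF_eq]
  simp only [ite_sum]
  rw [Finset.sum_comm]
  refine Finset.sum_congr rfl fun x _ => ?_
  rw [Finset.sum_eq_single (rest γ x)]
  · rw [if_pos rfl]; exact if_congr Iff.rfl rfl rfl
  · intro b _ hb; split_ifs with hA hB
    · exact absurd hB.symm hb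
    all_goals rfl
  · intro hmem; exact absurd (Finset.mem_univ _) hmem

end S13

namespace S13

variable {m : ℕ} {d : Fin m → ℕ}

def glue {γ δ : Finset (Fin m)} (hm : ∀ i : Fin m, i ∉ γ → i ∈ δ)
    (xa : PS d γ) (xb : PS d δ) : ∀ i, Fin (d i) :=
  fun i => if h : i ∈ γ then xa ⟨i, h⟩ else xb ⟨i, hm i h⟩

/-- agreement condition -/
def agr {γ δ : Finset (Fin m)} (xa : PS d γ) (xb : PS d δ) : Prop :=
  ∀ i (h1 : i ∈ γ) (h2 : i ∈ δ), xa ⟨i, h1⟩ = xb ⟨i, h2⟩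

lemma glue_resL {γ δ : Finset (Fin m)} (hm : ∀ i : Fin m, i ∉ γ → i ∈ δ)
    (xa : PS d γ) (xb : PS d δ) : rest γ (glue hm xa xb) = xa := by
  funext i
  show (if h : i.1 ∈ γ then xa ⟨i.1, h⟩ else _) = xa i
  rw [dif_pos i.2]

lemma glue_resR {γ δ : Finset (Fin m)} (hm : ∀ i : Fin m, i ∉ γ → i ∈ δ)
    (xa : PS d γ) (xb : PS d δ) (hagr : agr xa xb) : rest δ (glue hm xa xb) = xb := by
  funext i
  show (if h : i.1 ∈ γ then xa ⟨i.1, h⟩ else xb ⟨i.1, _⟩) = xb i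
  by_cases h : i.1 ∈ γ
  · rw [dif_pos h]; exact hagr i.1 h i.2
  · rw [dif_neg h]

lemma glue_rsub {γ δ T : Finset (Fin m)} (hm : ∀ i : Fin m, i ∉ γ → i ∈ δ)
    (hT : T ⊆ γ) (xa : PS d γ) (xb : PS d δ) :
    rest T (glue hm xa xb) = rsub hT xa := by
  funext i
  show (if h : i.1 ∈ γ then xa ⟨i.1, h⟩ else _) = xa ⟨i.1, hT i.2⟩
  rw [dif_pos (hT i.2)]

lemma splitSum {γ δ : Finset (Fin m)} (hm : ∀ i : Fin m, i ∉ γ → i ∈ δ)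
    (f : (∀ i, Fin (d i)) → ℝ) :
    ∑ x, f x = ∑ xa : PS d γ, ∑ xb : PS d δ,
      if agr xa xb then f (glue hm xa xb) else 0 := by
  rw [← Finset.sum_product', ← Finset.sum_filter]
  refine Finset.sum_nbij' (fun x => (rest γ x, rest δ x)) (fun q => glue hm q.1 q.2)
    ?_ ?_ ?_ ?_ ?_
  · intro x _
    refine Finset.mem_filter.mpr ⟨Finset.mem_product.mpr ⟨Finset.mem_univ _, Finset.mem_univ _⟩,
      fun i h1 h2 => rfl⟩
  · intro q _; exact Finset.mem_univ _
  · intro x _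
    funext i
    show (if h : i ∈ γ then x i else x i) = x i
    split_ifs <;> rfl
  · intro q hq
    have hagr : agr q.1 q.2 := (Finset.mem_filter.mp hq).2
    exact Prod.ext (glue_resL hm q.1 q.2) (glue_resR hm q.1 q.2 hagr)
  · intro x _
    congr 1
    funext i
    show x i = (if h : i ∈ γ then x i else x i)
    split_ifs <;> rfl

/-- inner agreement sum as a margSub -/
lemma agr_iff {γ δ T : Finset (Fin m)} (hTγ : T ⊆ γ) (hTδ : T ⊆ δ)
    (hcap : ∀ i, i ∈ γ → i ∈ δ → i ∈ T) (xa : PS d γ) (xb : PS d δ) :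
    agr xa xb ↔ rsub hTδ xb = rsub hTγ xa := by
  constructor
  · intro h; funext i; exact (h i.1 (hTγ i.2) (hTδ i.2)).symm
  · intro h i h1 h2
    exact (congrFun h ⟨i, hcap i h1 h2⟩).symm

lemma inner_marg {γ δ T : Finset (Fin m)} (hTγ : T ⊆ γ) (hTδ : T ⊆ δ)
    (hcap : ∀ i, i ∈ γ → i ∈ δ → i ∈ T) (b : PS d δ → ℝ) (xa : PS d γ) :
    ∑ xb : PS d δ, (if agr xa xb then b xb else 0)
      = margSub d δ T b (rsub hTγ xa) := by
  rw [margSub_eq hTδ]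
  refine Finset.sum_congr rfl fun xb _ => ?_
  exact if_congr (agr_iff hTγ hTδ hcap xa xb) rfl rfl

lemma split_mul {γ δ T : Finset (Fin m)} (hm : ∀ i : Fin m, i ∉ γ → i ∈ δ)
    (hTγ : T ⊆ γ) (hTδ : T ⊆ δ) (hcap : ∀ i, i ∈ γ → i ∈ δ → i ∈ T)
    (a : PS d γ → ℝ) (b : PS d δ → ℝ) :
    ∑ x, a (rest γ x) * b (rest δ x)
      = ∑ xa : PS d γ, a xa * margSub d δ T b (rsub hTγ xa) := by
  rw [splitSum hm (fun x => a (rest γ x) * b (rest δ x))]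
  refine Finset.sum_congr rfl fun xa _ => ?_
  rw [← inner_marg hTγ hTδ hcap b xa, Finset.mul_sum]
  refine Finset.sum_congr rfl fun xb _ => ?_
  by_cases h : agr xa xb
  · rw [if_pos h, if_pos h, glue_resL, glue_resR hm xa xb h]
  · rw [if_neg h, if_neg h, mul_zero]

lemma margSub_const_mul {T δ : Finset (Fin m)} (c : ℝ) (b : PS d δ → ℝ) (y : PS d T) :
    margSub d δ T (fun xb => c * b xb) y = c * margSub d δ T b y := by
  unfold margSub
  rw [Finset.mul_sum]
  refine Finset.sum_congr rfl fun xb _ => ?_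
  rw [mul_ite, mul_zero]

lemma margF_of_prod {γ δ T : Finset (Fin m)} (hm : ∀ i : Fin m, i ∉ γ → i ∈ δ)
    (hTγ : T ⊆ γ) (hTδ : T ⊆ δ) (hcap : ∀ i, i ∈ γ → i ∈ δ → i ∈ T)
    (c : ℝ) (fa : PS d γ → ℝ) (gb : PS d δ → ℝ) (q : (∀ i, Fin (d i)) → ℝ)
    (hq : ∀ x, q x = c * (fa (rest γ x) * gb (rest δ x))) (xa : PS d γ) :
    margF d γ q xa = c * (fa xa * margSub d δ T gb (rsub hTγ xa)) := by
  rw [margF_eq, splitSum hm (fun x => if rest γ x = xa then q x else 0)]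
  have key : ∀ xa' : PS d γ, ∑ xb : PS d δ,
      (if agr xa' xb then (if rest γ (glue hm xa' xb) = xa then q (glue hm xa' xb) else 0) else 0)
      = if xa' = xa then ∑ xb : PS d δ, (if agr xa' xb then c * (fa xa' * gb xb) else 0) else 0 := by
    intro xa'
    rw [ite_sum]
    refine Finset.sum_congr rfl fun xb _ => ?_
    by_cases h1 : agr xa' xb
    · rw [if_pos h1, glue_resL]
      by_cases h2 : xa' = xa
      · rw [if_pos h2, if_pos h2, if_pos h1, hq, glue_resL, glue_resR hm xa' xb h1]
      · rw [if_neg h2, if_neg h2]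
    · rw [if_neg h1]
      by_cases h2 : xa' = xa
      · rw [if_pos h2, if_neg h1]
      · rw [if_neg h2]
  simp only [key]
  rw [Finset.sum_ite_eq' Finset.univ xa, if_pos (Finset.mem_univ _),
    inner_marg hTγ hTδ hcap]
  have hfun : (fun xb => c * (fa xa * gb xb)) = fun xb => (c * fa xa) * gb xb := by
    funext xb; ring
  rw [hfun, margSub_const_mul]; ring

end S13

namespace S13

variable {m : ℕ} {d : Fin m → ℕ}

/-- total restriction with junk value -/
def resAny (hd : ∀ i, 0 < d i) (γ T : Finset (Fin m)) (xa : PS d γ) : PS d T :=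
  fun i => if h : i.1 ∈ γ then xa ⟨i.1, h⟩ else ⟨0, hd _⟩

lemma resAny_eq_rsub (hd : ∀ i, 0 < d i) {γ T : Finset (Fin m)} (h : T ⊆ γ)
    (xa : PS d γ) : resAny hd γ T xa = rsub h xa := by
  funext i
  show (if hh : i.1 ∈ γ then xa ⟨i.1, hh⟩ else (⟨0, hd _⟩ : Fin (d i.1))) = xa ⟨i.1, h i.2⟩
  rw [dif_pos (h i.2)]

lemma resAny_apply (hd : ∀ i, 0 < d i) {γ T : Finset (Fin m)} (xa : PS d γ)
    (i : {j // j ∈ T}) (h : i.1 ∈ γ) : resAny hd γ T xa i = xa ⟨i.1, h⟩ :=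
  dif_pos h

lemma exists_rsub (hd : ∀ i, 0 < d i) {γ T : Finset (Fin m)} (h : T ⊆ γ)
    (y : PS d T) : ∃ xa : PS d γ, rsub h xa = y := by
  refine ⟨fun i => if hh : i.1 ∈ T then y ⟨i.1, hh⟩ else ⟨0, hd _⟩, ?_⟩
  funext i
  show (if hh : i.1 ∈ T then y ⟨i.1, hh⟩ else _) = y i
  rw [dif_pos i.2]

lemma margSub_nonneg {T γ : Finset (Fin m)} (h : T ⊆ γ) {a : PS d γ → ℝ}
    (ha : ∀ xa, 0 ≤ a xa) (y : PS d T) : 0 ≤ margSub d γ T a y := by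
  rw [margSub_eq h]
  refine Finset.sum_nonneg fun xa _ => ?_
  split_ifs
  · exact ha xa
  · exact le_refl 0
    
lemma margSub_pos (hd : ∀ i, 0 < d i) {T γ : Finset (Fin m)} (h : T ⊆ γ)
    {a : PS d γ → ℝ} (ha : ∀ xa, 0 < a xa) (y : PS d T) : 0 < margSub d γ T a y := by
  rw [margSub_eq h]
  obtain ⟨xa, hxa⟩ := exists_rsub hd h y
  refine Finset.sum_pos' (fun z _ => ?_) ⟨xa, Finset.mem_univ _, ?_⟩
  · split_ifs
    · exact (ha z).le
    · exact le_refl 0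
  · rw [if_pos hxa]; exact ha xa

lemma margSub_div {T γ : Finset (Fin m)} (h : T ⊆ γ) (a : PS d γ → ℝ)
    (e : PS d T → ℝ) (y : PS d T) :
    margSub d γ T (fun xa => a xa / e (rsub h xa)) y = margSub d γ T a y / e y := by
  simp only [margSub_eq h, Finset.sum_div]
  refine Finset.sum_congr rfl fun xa _ => ?_
  split_ifs with hc
  · rw [hc]
  · rw [zero_div]

lemma margSub_mul_rsub {T γ : Finset (Fin m)} (h : T ⊆ γ) (a : PS d γ → ℝ)
    (e : PS d T → ℝ) (y : PS d T) :
    margSub d γ T (fun xa => a xa * e (rsub h xa)) y = margSub d γ T a y * e y := by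
  simp only [margSub_eq h, Finset.sum_mul]
  refine Finset.sum_congr rfl fun xa _ => ?_
  split_ifs with hc
  · rw [hc]
  · rw [zero_mul]

/-- Gibbs' inequality -/
lemma gibbs {ι : Type*} [Fintype ι] (r t : ι → ℝ) (hr0 : ∀ i, 0 ≤ r i)
    (hr1 : ∑ i, r i = 1) (ht0 : ∀ i, 0 ≤ t i) (ht1 : ∑ i, t i ≤ 1)
    (hsup : ∀ i, r i ≠ 0 → 0 < t i) :
    0 ≤ ∑ i, r i * Real.log (r i / t i) := by
  have key : ∀ i, r i * Real.log (t i / r i) ≤ t i - r i := by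
    intro i
    rcases eq_or_lt_of_le (hr0 i) with h | h
    · rw [← h, zero_mul, sub_zero]; exact ht0 i
    · have htpos : 0 < t i := hsup i h.ne'
      have hlog := Real.log_le_sub_one_of_pos (div_pos htpos h)
      have := mul_le_mul_of_nonneg_left hlog (le_of_lt h)
      calc r i * Real.log (t i / r i) ≤ r i * (t i / r i - 1) := this
        _ = t i - r i := by field_simp
  have hsum : ∑ i, r i * Real.log (t i / r i) ≤ 0 := by
    calc ∑ i, r i * Real.log (t i / r i) ≤ ∑ i, (t i - r i) :=
          Finset.sum_le_sum fun i _ => key i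
      _ = (∑ i, t i) - 1 := by rw [Finset.sum_sub_distrib, hr1]
      _ ≤ 0 := by linarith
  have hneg : ∀ i, r i * Real.log (r i / t i) = -(r i * Real.log (t i / r i)) := by
    intro i
    rcases eq_or_lt_of_le (hr0 i) with h | h
    · rw [← h]; ring
    · rw [← inv_div, Real.log_inv]; ring
  simp only [hneg, Finset.sum_neg_distrib]
  linarith

lemma KL_nonneg {ι : Type*} [Fintype ι] (r t : ι → ℝ) (hr : r ∈ simplex ι)
    (ht0 : ∀ i, 0 ≤ t i) (ht1 : ∑ i, t i ≤ 1) : (0 : EReal) ≤ KL r t := by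
  unfold KL
  split_ifs with hc
  · have := gibbs r t hr.1 hr.2 ht0 ht1 (fun i hi => by
      rcases eq_or_lt_of_le (ht0 i) with h | h
      · exact absurd (hc i h.symm) hi
      · exact h)
    exact_mod_cast this
  · exact le_top

lemma KL_coe {ι : Type*} [Fintype ι] (r t : ι → ℝ) (h : ∀ i, t i = 0 → r i = 0) :
    KL r t = ((∑ i, r i * Real.log (r i / t i) : ℝ) : EReal) := by
  unfold KL; rw [if_pos h]

lemma isClosed_simplex (ι : Type*) [Fintype ι] : IsClosed (simplex ι) := by
  have : simplex ι = (⋂ i, (fun p : ι → ℝ => p i) ⁻¹' Set.Ici 0) ∩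
      ((fun p : ι → ℝ => ∑ i, p i) ⁻¹' {1}) := by
    ext p
    simp [simplex, Set.mem_iInter, forall_and]
  rw [this]
  refine IsClosed.inter (isClosed_iInter fun i => ?_) ?_
  · exact IsClosed.preimage (continuous_apply i) isClosed_Ici
  · exact IsClosed.preimage (by continuity) isClosed_singleton

lemma closure_subset_simplex {ι : Type*} [Fintype ι] {M : Set (ι → ℝ)}
    (h : M ⊆ simplex ι) : closure M ⊆ simplex ι :=
  closure_minimal h (isClosed_simplex ι)

/-- limit of KL-type sums -/
lemma tendsto_KLsum {ι : Type*} [Fintype ι] (r : ι → ℝ) (t : ℕ → ι → ℝ) (tl : ι → ℝ)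
    (hconv : ∀ i, Filter.Tendsto (fun n => t n i) Filter.atTop (nhds (tl i)))
    (hne : ∀ i, r i ≠ 0 → tl i ≠ 0) :
    Filter.Tendsto (fun n => ∑ i, r i * Real.log (r i / t n i)) Filter.atTop
      (nhds (∑ i, r i * Real.log (r i / tl i))) := by
  refine tendsto_finset_sum _ fun i _ => ?_
  rcases eq_or_ne (r i) 0 with h | h
  · simp only [h, zero_mul]; exact tendsto_const_nhds
  · refine Filter.Tendsto.const_mul _ ?_
    have hdiv : Filter.Tendsto (fun n => r i / t n i) Filter.atTop (nhds (r i / tl i)) :=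
      Filter.Tendsto.div tendsto_const_nhds (hconv i) (hne i h)
    have hlog : ContinuousAt Real.log (r i / tl i) :=
      Real.continuousAt_log (div_ne_zero h (hne i h))
    exact hlog.tendsto.comp hdiv

end S13

namespace S13

lemma ereal_le_add_of_forall {X Y : Type*} (s : Set X) (t : Set Y)
    (f : X → EReal) (g : Y → EReal) (a : EReal)
    (hf : ∀ x ∈ s, 0 ≤ f x) (hg : ∀ y ∈ t, 0 ≤ g y)
    (h : ∀ x ∈ s, ∀ y ∈ t, a ≤ f x + g y) :
    a ≤ (⨅ x ∈ s, f x) + ⨅ y ∈ t, g y := by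
  set A := ⨅ x ∈ s, f x with hA
  set B := ⨅ y ∈ t, g y with hB
  have hA0 : (0 : EReal) ≤ A := le_iInf₂ hf
  have hB0 : (0 : EReal) ≤ B := le_iInf₂ hg
  rcases eq_or_ne A ⊤ with hAt | hAt
  · rw [hAt, EReal.top_add_of_ne_bot (fun hb => by simp [hb] at hB0)]
    exact le_top
  rcases eq_or_ne B ⊤ with hBt | hBt
  · rw [hBt, EReal.add_top_of_ne_bot (fun hb => by simp [hb] at hA0)]
    exact le_top
  have hAb : A ≠ ⊥ := fun hb => by simp [hb] at hA0
  have hBb : B ≠ ⊥ := fun hb => by simp [hb] at hB0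
  obtain ⟨x0, hx0⟩ : ∃ r : ℝ, A = (r : EReal) := ⟨A.toReal, (EReal.coe_toReal hAt hAb).symm⟩
  obtain ⟨y0, hy0⟩ : ∃ r : ℝ, B = (r : EReal) := ⟨B.toReal, (EReal.coe_toReal hBt hBb).symm⟩
  rw [hx0, hy0, ← EReal.coe_add]
  have key : ∀ ε : ℝ, 0 < ε → a ≤ ((x0 + y0 + 2 * ε : ℝ) : EReal) := by
    intro ε hε
    have h1 : A < ((x0 + ε : ℝ) : EReal) := by
      rw [hx0]; exact_mod_cast (by linarith : x0 < x0 + ε)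
    have h2 : B < ((y0 + ε : ℝ) : EReal) := by
      rw [hy0]; exact_mod_cast (by linarith : y0 < y0 + ε)
    rw [hA, iInf_lt_iff] at h1
    obtain ⟨x, hx1⟩ := h1
    rw [iInf_lt_iff] at hx1
    obtain ⟨hxs, hx2⟩ := hx1
    rw [hB, iInf_lt_iff] at h2
    obtain ⟨y, hy1⟩ := h2
    rw [iInf_lt_iff] at hy1
    obtain ⟨hys, hy2⟩ := hy1
    calc a ≤ f x + g y := h x hxs y hys
      _ ≤ ((x0 + ε : ℝ) : EReal) + ((y0 + ε : ℝ) : EReal) :=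
          add_le_add hx2.le hy2.le
      _ = ((x0 + y0 + 2 * ε : ℝ) : EReal) := by
          rw [← EReal.coe_add]; exact congrArg _ (by ring)
  rcases eq_or_ne a ⊥ with hab | hab
  · rw [hab]; exact bot_le
  rcases eq_or_ne a ⊤ with hat | hat
  · exfalso
    have := key 1 one_pos
    rw [hat] at this
    exact absurd (top_le_iff.mp this) (EReal.coe_ne_top _)
  obtain ⟨r, hr⟩ : ∃ r : ℝ, a = (r : EReal) := ⟨a.toReal, (EReal.coe_toReal hat hab).symm⟩
  rw [hr]
  refine EReal.coe_le_coe_iff.mpr ?_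
  by_contra hc
  push_neg at hc
  have hε : 0 < (r - (x0 + y0)) / 3 := by linarith
  have := key _ hε
  rw [hr] at this
  have := EReal.coe_le_coe_iff.mp this
  linarith

end S13

namespace S13

variable {m : ℕ} {d : Fin m → ℕ}

lemma subProd_eq {γ : Finset (Fin m)} (𝓕' : Finset (Finset (Fin m)))
    (hsub : ∀ F ∈ 𝓕', F ⊆ γ)
    (θA : (F : {F // F ∈ 𝓕'}) → (PS d F.1 → ℝ))
    (Θ : (F : Finset (Fin m)) → (PS d F → ℝ))
    (hθh : ∀ F (h : F ∈ 𝓕'), Θ F = θA ⟨F, h⟩)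
    (x : ∀ i, Fin (d i)) :
    (∏ F : {F // F ∈ 𝓕'}, θA F (fun i => (rest γ x) ⟨i.1, hsub F.1 F.2 i.2⟩))
      = ∏ F ∈ 𝓕', Θ F (rest F x) := by
  rw [Finset.univ_eq_attach, ← Finset.prod_attach 𝓕' (fun F => Θ F (rest F x))]
  refine Finset.prod_congr rfl fun F _ => ?_
  rw [hθh F.1 F.2]
  rfl

lemma hierModelSub_pos {γ : Finset (Fin m)} {𝓕' : Finset (Finset (Fin m))}
    {hsub : ∀ F ∈ 𝓕', F ⊆ γ} {qa : PS d γ → ℝ}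
    (hqa : qa ∈ hierModelSub d γ 𝓕' hsub) : ∀ xa, 0 < qa xa := by
  obtain ⟨_, θ, hθ, Z, hZ, hrep⟩ := hqa
  intro xa
  rw [hrep]
  exact mul_pos (by positivity) (Finset.prod_pos fun F _ => hθ F _)

lemma hierModel_pos {𝓕 : Finset (Finset (Fin m))} {q : (∀ i, Fin (d i)) → ℝ}
    (hq : q ∈ hierModel d 𝓕) : ∀ x, 0 < q x := by
  obtain ⟨_, θ, hθ, Z, hZ, hrep⟩ := hq
  intro x
  rw [hrep]
  exact mul_pos (by positivity) (Finset.prod_pos fun F _ => hθ F _)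

/-- decomposition of a member of `hierModelSub` with junk-total factor functions -/
lemma hierModelSub_decomp (hd : ∀ i, 0 < d i) {γ : Finset (Fin m)}
    {𝓕' : Finset (Finset (Fin m))} {hsub : ∀ F ∈ 𝓕', F ⊆ γ} {qa : PS d γ → ℝ}
    (hqa : qa ∈ hierModelSub d γ 𝓕' hsub) :
    ∃ (c : ℝ) (Θ : (F : Finset (Fin m)) → (PS d F → ℝ)), 0 < c ∧ (∀ F y, 0 < Θ F y) ∧
      ∀ xa, qa xa = c * ∏ F ∈ 𝓕', Θ F (resAny hd γ F xa) := by
  obtain ⟨_, θ, hθ, Z, hZ, hrep⟩ := hqa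
  classical
  refine ⟨1 / Z, fun F => if h : F ∈ 𝓕' then θ ⟨F, h⟩ else fun _ => 1, by positivity,
    ?_, ?_⟩
  · intro F y
    by_cases h : F ∈ 𝓕'
    · show 0 < (if h' : F ∈ 𝓕' then θ ⟨F, h'⟩ else fun _ => 1) y
      rw [dif_pos h]; exact hθ _ _
    · show 0 < (if h' : F ∈ 𝓕' then θ ⟨F, h'⟩ else fun _ => 1) y
      rw [dif_neg h]; exact one_pos
  · intro xa
    rw [hrep xa]
    congr 1
    rw [Finset.univ_eq_attach, ← Finset.prod_attach 𝓕'
      (fun F => (if h : F ∈ 𝓕' then θ ⟨F, h⟩ else fun _ => 1) (resAny hd γ F xa))]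
    refine Finset.prod_congr rfl fun F _ => ?_
    rw [dif_pos F.2]
    congr 1
    funext i
    show xa ⟨i.1, _⟩ = (if h : i.1 ∈ γ then xa ⟨i.1, h⟩ else _)
    rw [dif_pos (hsub F.1 F.2 i.2)]

/-- decomposition of a member of `hierModel` along a split of the facets -/
lemma hier_decomp (hd : ∀ i, 0 < d i) {γ δ : Finset (Fin m)}
    {𝓕 : Finset (Finset (Fin m))} (hsp : ∀ F ∈ 𝓕, F ⊆ γ ∨ F ⊆ δ)
    {q : (∀ i, Fin (d i)) → ℝ} (hq : q ∈ hierModel d 𝓕) :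
    ∃ (c : ℝ) (Θ : (F : Finset (Fin m)) → (PS d F → ℝ)), 0 < c ∧ (∀ F y, 0 < Θ F y) ∧
      ∀ x, q x = c * ((∏ F ∈ 𝓕.filter (· ⊆ γ), Θ F (resAny hd γ F (rest γ x))) *
        (∏ F ∈ 𝓕.filter (fun F => ¬ F ⊆ γ), Θ F (resAny hd δ F (rest δ x)))) := by
  obtain ⟨_, θ, hθ, Z, hZ, hrep⟩ := hq
  classical
  set Θ : (F : Finset (Fin m)) → (PS d F → ℝ) :=
    fun F => if h : F ∈ 𝓕 then θ ⟨F, h⟩ else fun _ => 1 with hΘdef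
  have hΘpos : ∀ F y, 0 < Θ F y := by
    intro F y
    rw [hΘdef]
    dsimp only
    split_ifs with h
    · exact hθ _ _
    · exact one_pos
  refine ⟨1 / Z, Θ, by positivity, hΘpos, ?_⟩
  intro x
  rw [hrep x]
  congr 1
  have h1 : (∏ F : {F // F ∈ 𝓕}, θ F (fun i => x i.1)) = ∏ F ∈ 𝓕, Θ F (rest F x) := by
    rw [Finset.univ_eq_attach, ← Finset.prod_attach 𝓕 (fun F => Θ F (rest F x))]
    refine Finset.prod_congr rfl fun F _ => ?_
    rw [hΘdef]
    dsimp only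
    rw [dif_pos F.2]
    rfl
  rw [h1, ← Finset.prod_filter_mul_prod_filter_not 𝓕 (· ⊆ γ)]
  congr 1
  · refine Finset.prod_congr rfl fun F hF => ?_
    have hFγ : F ⊆ γ := (Finset.mem_filter.mp hF).2
    congr 1
    funext i
    show x i.1 = (if h : i.1 ∈ γ then x i.1 else _)
    rw [dif_pos (hFγ i.2)]
  · refine Finset.prod_congr rfl fun F hF => ?_
    have hFδ : F ⊆ δ :=
      (hsp F (Finset.mem_filter.mp hF).1).resolve_left (Finset.mem_filter.mp hF).2
    congr 1
    funext i
    show x i.1 = (if h : i.1 ∈ δ then x i.1 else _)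
    rw [dif_pos (hFδ i.2)]

/-- membership criterion for `hierModelSub` -/
lemma mem_hierModelSub_of {γ T : Finset (Fin m)} (hd : ∀ i, 0 < d i)
    (𝓕' : Finset (Finset (Fin m))) (hsub : ∀ F ∈ 𝓕', F ⊆ γ)
    (G : Finset (Finset (Fin m))) (hG : G ⊆ 𝓕')
    (Θ : (F : Finset (Fin m)) → (PS d F → ℝ)) (hΘ : ∀ F y, 0 < Θ F y)
    (F₁ : Finset (Fin m)) (hF₁ : F₁ ∈ 𝓕') (hTF₁ : T ⊆ F₁)
    (E : PS d T → ℝ) (hE : ∀ s, 0 < E s)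
    (c : ℝ) (hc : 0 < c) (A : PS d γ → ℝ)
    (hA : ∀ xa, A xa = c * ((∏ F ∈ G, Θ F (resAny hd γ F xa)) *
      E (rsub (hTF₁.trans (hsub F₁ hF₁)) xa)))
    (hsum : ∑ xa, A xa = 1) :
    A ∈ hierModelSub d γ 𝓕' hsub := by
  classical
  have hApos : ∀ xa, 0 < A xa := by
    intro xa
    rw [hA]
    exact mul_pos hc (mul_pos (Finset.prod_pos fun F _ => hΘ F _) (hE _))
  refine ⟨⟨fun xa => (hApos xa).le, hsum⟩,
    fun F y => (if F.1 ∈ G then Θ F.1 y else 1) *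
      (if F.1 = F₁ then E (resAny hd F.1 T y) else 1),
    ?_, 1 / c, by positivity, ?_⟩
  · intro F y
    refine mul_pos ?_ ?_ <;> (split_ifs <;> first | exact hΘ _ _ | exact hE _ | exact one_pos)
  · intro xa
    rw [one_div_one_div, hA xa]
    congr 1
    rw [Finset.univ_eq_attach]
    have h2 : (∏ F ∈ 𝓕'.attach,
        ((if F.1 ∈ G then Θ F.1 (fun i => xa ⟨i.1, hsub F.1 F.2 i.2⟩) else 1) *
          (if F.1 = F₁ then E (resAny hd F.1 T (fun i => xa ⟨i.1, hsub F.1 F.2 i.2⟩)) else 1)))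
        = ∏ F' ∈ 𝓕', ((if F' ∈ G then Θ F' (resAny hd γ F' xa) else 1) *
            (if F' = F₁ then E (resAny hd F' T (resAny hd γ F' xa)) else 1)) := by
      rw [← Finset.prod_attach 𝓕' (fun F' => (if F' ∈ G then Θ F' (resAny hd γ F' xa) else 1) *
            (if F' = F₁ then E (resAny hd F' T (resAny hd γ F' xa)) else 1))]
      refine Finset.prod_congr rfl fun F _ => ?_
      have harg : (fun i : {j // j ∈ F.1} => xa ⟨i.1, hsub F.1 F.2 i.2⟩) = resAny hd γ F.1 xa := by
        funext i
        exact (resAny_apply (γ := γ) (T := F.1) hd xa i (hsub F.1 F.2 i.2)).symm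
      rw [harg]
    rw [h2, Finset.prod_mul_distrib]
    congr 1
    · rw [← Finset.prod_filter]
      congr 1
      ext F
      simp only [Finset.mem_filter]
      exact ⟨fun h => ⟨hG h, h⟩, fun h => h.2⟩
    · rw [Finset.prod_ite_eq' 𝓕' F₁
        (fun F' => E (resAny hd F' T (resAny hd γ F' xa))), if_pos hF₁]
      congr 1
      funext i
      have hiF₁ : i.1 ∈ F₁ := hTF₁ i.2
      have hiγ : i.1 ∈ γ := (hsub F₁ hF₁) hiF₁
      rw [resAny_apply (γ := F₁) (T := T) hd _ i hiF₁,
        resAny_apply (γ := γ) (T := F₁) hd xa ⟨i.1, hiF₁⟩ hiγ]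
      rfl

/-- membership criterion for `hierModel` -/
lemma mem_hierModel_of {T : Finset (Fin m)} (hd : ∀ i, 0 < d i)
    (𝓕 : Finset (Finset (Fin m)))
    (G1 G2 : Finset (Finset (Fin m))) (hG1 : G1 ⊆ 𝓕) (hG2 : G2 ⊆ 𝓕)
    (Θ1 Θ2 : (F : Finset (Fin m)) → (PS d F → ℝ))
    (hΘ1 : ∀ F y, 0 < Θ1 F y) (hΘ2 : ∀ F y, 0 < Θ2 F y)
    (F₁ : Finset (Fin m)) (hF₁ : F₁ ∈ 𝓕) (hTF₁ : T ⊆ F₁)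
    (E : PS d T → ℝ) (hE : ∀ s, 0 < E s)
    (c : ℝ) (hc : 0 < c) (q : (∀ i, Fin (d i)) → ℝ)
    (hq : ∀ x, q x = c * ((∏ F ∈ G1, Θ1 F (rest F x)) *
      (∏ F ∈ G2, Θ2 F (rest F x)) * E (rest T x)))
    (hsum : ∑ x, q x = 1) :
    q ∈ hierModel d 𝓕 := by
  classical
  have hqpos : ∀ x, 0 < q x := by
    intro x
    rw [hq]
    exact mul_pos hc (mul_pos (mul_pos (Finset.prod_pos fun F _ => hΘ1 F _)
      (Finset.prod_pos fun F _ => hΘ2 F _)) (hE _))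
  refine ⟨⟨fun x => (hqpos x).le, hsum⟩,
    fun F y => (if F.1 ∈ G1 then Θ1 F.1 y else 1) * (if F.1 ∈ G2 then Θ2 F.1 y else 1) *
      (if F.1 = F₁ then E (resAny hd F.1 T y) else 1),
    ?_, 1 / c, by positivity, ?_⟩
  · intro F y
    refine mul_pos (mul_pos ?_ ?_) ?_ <;>
      (split_ifs <;> first | exact hΘ1 _ _ | exact hΘ2 _ _ | exact hE _ | exact one_pos)
  · intro x
    rw [one_div_one_div, hq x]
    congr 1
    rw [Finset.univ_eq_attach]
    have h2 : (∏ F ∈ 𝓕.attach,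
        ((if F.1 ∈ G1 then Θ1 F.1 (fun i => x i.1) else 1) *
          (if F.1 ∈ G2 then Θ2 F.1 (fun i => x i.1) else 1) *
          (if F.1 = F₁ then E (resAny hd F.1 T (fun i => x i.1)) else 1)))
        = ∏ F' ∈ 𝓕, ((if F' ∈ G1 then Θ1 F' (rest F' x) else 1) *
            (if F' ∈ G2 then Θ2 F' (rest F' x) else 1) *
            (if F' = F₁ then E (resAny hd F' T (rest F' x)) else 1)) := by
      rw [← Finset.prod_attach 𝓕 (fun F' => (if F' ∈ G1 then Θ1 F' (rest F' x) else 1) *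
            (if F' ∈ G2 then Θ2 F' (rest F' x) else 1) *
            (if F' = F₁ then E (resAny hd F' T (rest F' x)) else 1))]
      exact Finset.prod_congr rfl fun F _ => rfl
    rw [h2, Finset.prod_mul_distrib, Finset.prod_mul_distrib]
    congr 1
    · congr 1
      · rw [← Finset.prod_filter]
        congr 1
        ext F
        simp only [Finset.mem_filter]
        exact ⟨fun h => ⟨hG1 h, h⟩, fun h => h.2⟩
      · rw [← Finset.prod_filter]
        congr 1
        ext F
        simp only [Finset.mem_filter]
        exact ⟨fun h => ⟨hG2 h, h⟩, fun h => h.2⟩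
    · rw [Finset.prod_ite_eq' 𝓕 F₁ (fun F' => E (resAny hd F' T (rest F' x))), if_pos hF₁]
      congr 1
      funext i
      exact (resAny_apply (γ := F₁) (T := T) hd (rest F₁ x) i (hTF₁ i.2)).symm

end S13

/- STATEMENT 13: for a reducible decomposition `(α, S, β)` of `𝓕`, `p ∈ Δ_R` with strictly
positive `S`-marginal, `v ∈ Q^α_{p_α}` and `w ∈ Q^β_{p_β}`, the point
`u_x = v(x_α)·w(x_β)/p_S(x_S)` lies in `Δ_R` and its divergence from `M_𝓕` equals the sum of
the divergences of `v` from `M_{𝓕_α}` and of `w` from `M_{𝓕_β}`. -/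
open S13 Filter Topology in
/-- for a reducible decomposition `(α, S, β)` of `𝓕`, `p ∈ Δ_R` with strictly
positive `S`-marginal, `v ∈ Q^α_{p_α}` and `w ∈ Q^β_{p_β}`, the point
`u_x = v(x_α)·w(x_β)/p_S(x_S)` lies in `Δ_R` and its divergence from `M_𝓕` equals the sum of
the divergences of `v` from `M_{𝓕_α}` and of `w` from `M_{𝓕_β}`. -/
theorem stmt13 {m : ℕ} (d : Fin m → ℕ) (𝓕 : Finset (Finset (Fin m)))
    (hcov : ∀ i : Fin m, ∃ F ∈ 𝓕, i ∈ F)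
    (α β : Finset (Fin m)) (hunion : α ∪ β = Finset.univ)
    (hsplit : ∀ F ∈ 𝓕, F ⊆ α ∨ F ⊆ β)
    (hS1 : ∃ F ∈ 𝓕, α ∩ β ⊆ F ∧ F ⊆ α)
    (hS2 : ∃ F ∈ 𝓕, α ∩ β ⊆ F ∧ F ⊆ β)
    (p : (∀ i, Fin (d i)) → ℝ) (hp : p ∈ simplex (∀ i, Fin (d i)))
    (hpS : ∀ y, 0 < margF d (α ∩ β) p y)
    (v : ((i : {j // j ∈ α}) → Fin (d i.1)) → ℝ)
    (hv : v ∈ simplex ((i : {j // j ∈ α}) → Fin (d i.1)) ∧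
      ∀ F ∈ 𝓕, F ⊆ α → margSub d α F v = margSub d α F (margF d α p))
    (w : ((i : {j // j ∈ β}) → Fin (d i.1)) → ℝ)
    (hw : w ∈ simplex ((i : {j // j ∈ β}) → Fin (d i.1)) ∧
      ∀ F ∈ 𝓕, F ⊆ β → margSub d β F w = margSub d β F (margF d β p))
    (u : (∀ i, Fin (d i)) → ℝ)
    (hu : ∀ x, u x = v (fun i => x i.1) * w (fun i => x i.1) /
      margF d (α ∩ β) p (fun i => x i.1)) :
    u ∈ simplex (∀ i, Fin (d i)) ∧
    divFrom (closure (hierModel d 𝓕)) u =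
      divFrom (closure (hierModelSub d α (𝓕.filter (· ⊆ α))
        (fun F hF => (Finset.mem_filter.mp hF).2))) v +
      divFrom (closure (hierModelSub d β (𝓕.filter (· ⊆ β))
        (fun F hF => (Finset.mem_filter.mp hF).2))) w := by
  set S : Finset (Fin m) := α ∩ β with hSdef
  have hSα : S ⊆ α := Finset.inter_subset_left
  have hSβ : S ⊆ β := Finset.inter_subset_right
  have hmαβ : ∀ i : Fin m, i ∉ α → i ∈ β := by
    intro i hi
    have hiu : i ∈ α ∪ β := by rw [hunion]; exact Finset.mem_univ i
    exact (Finset.mem_union.mp hiu).resolve_left hi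
  have hmβα : ∀ i : Fin m, i ∉ β → i ∈ α := by
    intro i hi
    have hiu : i ∈ α ∪ β := by rw [hunion]; exact Finset.mem_univ i
    exact (Finset.mem_union.mp hiu).resolve_right hi
  have hcapαβ : ∀ i, i ∈ α → i ∈ β → i ∈ S := fun i h1 h2 => Finset.mem_inter.mpr ⟨h1, h2⟩
  have hcapβα : ∀ i, i ∈ β → i ∈ α → i ∈ S := fun i h1 h2 => Finset.mem_inter.mpr ⟨h2, h1⟩
  have hd : ∀ i, 0 < d i := by
    by_contra hcon
    push_neg at hcon
    obtain ⟨i, hi⟩ := hcon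
    have hie : IsEmpty (∀ j, Fin (d j)) :=
      ⟨fun x => absurd ((x i).2) (by omega)⟩
    have he : (Finset.univ : Finset (∀ j, Fin (d j))) = ∅ := Finset.univ_eq_empty
    have := hp.2
    rw [he, Finset.sum_empty] at this
    norm_num at this
  obtain ⟨F₁, hF₁𝓕, hSF₁, hF₁α⟩ := hS1
  obtain ⟨F₂, hF₂𝓕, hSF₂, hF₂β⟩ := hS2
  set pS : PS d S → ℝ := margF d S p with hpSdef
  have hu' : ∀ x, u x = v (rest α x) * w (rest β x) / pS (rest S x) := hu
  have hpS0 : ∀ y, pS y ≠ 0 := fun y => (hpS y).ne'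
  have hpSsum : ∑ y, pS y = 1 := by rw [hpSdef, margF_sum, hp.2]
  -- marginal agreement
  have hvS : margSub d α S v = pS := by
    calc margSub d α S v = margSub d F₁ S (margSub d α F₁ v) :=
          (margSub_margSub hSF₁ hF₁α v).symm
      _ = margSub d F₁ S (margSub d α F₁ (margF d α p)) := by rw [hv.2 F₁ hF₁𝓕 hF₁α]
      _ = margSub d α S (margF d α p) := margSub_margSub hSF₁ hF₁α _
      _ = pS := margSub_margF hSα p
  have hwS : margSub d β S w = pS := by
    calc margSub d β S w = margSub d F₂ S (margSub d β F₂ w) :=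
          (margSub_margSub hSF₂ hF₂β w).symm
      _ = margSub d F₂ S (margSub d β F₂ (margF d β p)) := by rw [hw.2 F₂ hF₂𝓕 hF₂β]
      _ = margSub d β S (margF d β p) := margSub_margSub hSF₂ hF₂β _
      _ = pS := margSub_margF hSβ p
  -- u is a probability vector
  have hun : ∀ x, 0 ≤ u x := by
    intro x
    rw [hu' x]
    exact div_nonneg (mul_nonneg (hv.1.1 _) (hw.1.1 _)) (hpS _).le
  have husum : ∑ x, u x = 1 := by
    have h1 : ∀ x ∈ Finset.univ, u x =
        (v (rest α x) / pS (rest S x)) * w (rest β x) := by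
      intro x _
      rw [hu' x]; ring
    calc ∑ x, u x = ∑ x, (v (rest α x) / pS (rest S x)) * w (rest β x) :=
          Finset.sum_congr rfl h1
      _ = ∑ xa, (v xa / pS (rsub hSα xa)) * margSub d β S w (rsub hSα xa) :=
          split_mul hmαβ hSα hSβ hcapαβ (fun xa => v xa / pS (rsub hSα xa)) w
      _ = ∑ xa, v xa := by
          rw [hwS]
          exact Finset.sum_congr rfl fun xa _ => div_mul_cancel₀ _ (hpS0 _)
      _ = 1 := hv.1.2
  have husimplex : u ∈ simplex (∀ i, Fin (d i)) := ⟨hun, husum⟩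
  -- push lemmas
  have pushA : ∀ g : PS d α → ℝ, ∑ x, u x * g (rest α x) = ∑ xa, v xa * g xa := by
    intro g
    have h1 : ∀ x ∈ Finset.univ, u x * g (rest α x) =
        (v (rest α x) * g (rest α x) / pS (rest S x)) * w (rest β x) := by
      intro x _
      rw [hu' x]; ring
    calc ∑ x, u x * g (rest α x)
        = ∑ x, (v (rest α x) * g (rest α x) / pS (rest S x)) * w (rest β x) :=
          Finset.sum_congr rfl h1
      _ = ∑ xa, (v xa * g xa / pS (rsub hSα xa)) * margSub d β S w (rsub hSα xa) :=
          split_mul hmαβ hSα hSβ hcapαβ (fun xa => v xa * g xa / pS (rsub hSα xa)) w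
      _ = ∑ xa, v xa * g xa := by
          rw [hwS]
          exact Finset.sum_congr rfl fun xa _ => div_mul_cancel₀ _ (hpS0 _)
  have pushB : ∀ g : PS d β → ℝ, ∑ x, u x * g (rest β x) = ∑ xb, w xb * g xb := by
    intro g
    have h1 : ∀ x ∈ Finset.univ, u x * g (rest β x) =
        (w (rest β x) * g (rest β x) / pS (rest S x)) * v (rest α x) := by
      intro x _
      rw [hu' x]; ring
    calc ∑ x, u x * g (rest β x)
        = ∑ x, (w (rest β x) * g (rest β x) / pS (rest S x)) * v (rest α x) :=
          Finset.sum_congr rfl h1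
      _ = ∑ xb, (w xb * g xb / pS (rsub hSβ xb)) * margSub d α S v (rsub hSβ xb) :=
          split_mul hmβα hSβ hSα hcapβα (fun xb => w xb * g xb / pS (rsub hSβ xb)) v
      _ = ∑ xb, w xb * g xb := by
          rw [hvS]
          exact Finset.sum_congr rfl fun xb _ => div_mul_cancel₀ _ (hpS0 _)
  -- KL splitting identity
  have KLsplit : ∀ (Aq : PS d α → ℝ) (Bq : PS d β → ℝ) (ES : PS d S → ℝ),
      (∀ xa, 0 < Aq xa) → (∀ xb, 0 < Bq xb) → (∀ s, 0 < ES s) →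
      ∑ x, u x * Real.log (u x / (Aq (rest α x) * Bq (rest β x) / ES (rest S x)))
        = (∑ xa, v xa * Real.log (v xa / Aq xa)) + (∑ xb, w xb * Real.log (w xb / Bq xb))
          + (∑ y, pS y * Real.log (ES y / pS y)) := by
    intro Aq Bq ES hAq hBq hES
    have hpt : ∀ x ∈ Finset.univ,
        u x * Real.log (u x / (Aq (rest α x) * Bq (rest β x) / ES (rest S x)))
        = u x * Real.log (v (rest α x) / Aq (rest α x))
          + u x * Real.log (w (rest β x) / Bq (rest β x))
          + u x * Real.log (ES (rest S x) / pS (rest S x)) := by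
      intro x _
      rcases eq_or_ne (u x) 0 with h0 | h0
      · rw [h0]; ring
      · have hv0 : v (rest α x) ≠ 0 := by
          intro hz; apply h0; rw [hu' x, hz, zero_mul, zero_div]
        have hw0 : w (rest β x) ≠ 0 := by
          intro hz; apply h0; rw [hu' x, hz, mul_zero, zero_div]
        have h1 := (hAq (rest α x)).ne'
        have h2 := (hBq (rest β x)).ne'
        have h3 := (hES (rest S x)).ne'
        have h4 := hpS0 (rest S x)
        have harg : u x / (Aq (rest α x) * Bq (rest β x) / ES (rest S x))
            = (v (rest α x) / Aq (rest α x)) * ((w (rest β x) / Bq (rest β x))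
              * (ES (rest S x) / pS (rest S x))) := by
          rw [hu' x]
          field_simp
        rw [harg, Real.log_mul (div_ne_zero hv0 h1)
            (mul_ne_zero (div_ne_zero hw0 h2) (div_ne_zero h3 h4)),
          Real.log_mul (div_ne_zero hw0 h2) (div_ne_zero h3 h4)]
        ring
    calc ∑ x, u x * Real.log (u x / (Aq (rest α x) * Bq (rest β x) / ES (rest S x)))
        = ∑ x, (u x * Real.log (v (rest α x) / Aq (rest α x))
          + u x * Real.log (w (rest β x) / Bq (rest β x))
          + u x * Real.log (ES (rest S x) / pS (rest S x))) := Finset.sum_congr rfl hpt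
      _ = (∑ x, u x * Real.log (v (rest α x) / Aq (rest α x)))
          + (∑ x, u x * Real.log (w (rest β x) / Bq (rest β x)))
          + (∑ x, u x * Real.log (ES (rest S x) / pS (rest S x))) := by
          rw [Finset.sum_add_distrib, Finset.sum_add_distrib]
      _ = (∑ xa, v xa * Real.log (v xa / Aq xa)) + (∑ xb, w xb * Real.log (w xb / Bq xb))
          + (∑ y, pS y * Real.log (ES y / pS y)) := by
          congr 1
          · congr 1
            · exact pushA (fun xa => Real.log (v xa / Aq xa))
            · exact pushB (fun xb => Real.log (w xb / Bq xb))
          · calc ∑ x, u x * Real.log (ES (rest S x) / pS (rest S x))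
                = ∑ xa, v xa * Real.log (ES (rsub hSα xa) / pS (rsub hSα xa)) :=
                  pushA (fun xa => Real.log (ES (rsub hSα xa) / pS (rsub hSα xa)))
              _ = ∑ y, margSub d α S v y * Real.log (ES y / pS y) :=
                  push hSα v (fun y => Real.log (ES y / pS y))
              _ = ∑ y, pS y * Real.log (ES y / pS y) := by rw [hvS]
  -- composition of two sub-model points into the full model
  have comp : ∀ qa ∈ hierModelSub d α (𝓕.filter (· ⊆ α))
        (fun F hF => (Finset.mem_filter.mp hF).2),
      ∀ qb ∈ hierModelSub d β (𝓕.filter (· ⊆ β))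
        (fun F hF => (Finset.mem_filter.mp hF).2),
      ∃ Q ∈ hierModel d 𝓕, (∀ x, 0 < Q x) ∧
        (∑ x, u x * Real.log (u x / Q x))
          ≤ (∑ xa, v xa * Real.log (v xa / qa xa))
            + (∑ xb, w xb * Real.log (w xb / qb xb)) := by
    intro qa hqa qb hqb
    have hqa0 : ∀ xa, 0 < qa xa := hierModelSub_pos hqa
    have hqb0 : ∀ xb, 0 < qb xb := hierModelSub_pos hqb
    set qaS : PS d S → ℝ := margSub d α S qa with hqaSdef
    have hqaS0 : ∀ y, 0 < qaS y := fun y => margSub_pos hd hSα hqa0 y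
    set Q : (∀ i, Fin (d i)) → ℝ :=
      fun x => qa (rest α x) * qb (rest β x) / qaS (rest S x) with hQdef
    have hQpos : ∀ x, 0 < Q x := fun x => div_pos (mul_pos (hqa0 _) (hqb0 _)) (hqaS0 _)
    have hQsum : ∑ x, Q x = 1 := by
      have h1 : ∀ x ∈ Finset.univ, Q x
          = qb (rest β x) * (qa (rest α x) / qaS (rest S x)) := by
        intro x _
        show qa (rest α x) * qb (rest β x) / qaS (rest S x) = _
        ring
      calc ∑ x, Q x = ∑ x, qb (rest β x) * (qa (rest α x) / qaS (rest S x)) :=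
            Finset.sum_congr rfl h1
        _ = ∑ xb, qb xb * margSub d α S (fun xa => qa xa / qaS (rsub hSα xa)) (rsub hSβ xb) :=
            split_mul hmβα hSβ hSα hcapβα qb (fun xa => qa xa / qaS (rsub hSα xa))
        _ = ∑ xb, qb xb := by
            refine Finset.sum_congr rfl fun xb _ => ?_
            rw [margSub_div hSα qa qaS, ← hqaSdef, div_self (hqaS0 _).ne', mul_one]
        _ = 1 := hqb.1.2
    obtain ⟨cA, ΘA, hcA, hΘA, hrepA⟩ := hierModelSub_decomp hd hqa
    obtain ⟨cB, ΘB, hcB, hΘB, hrepB⟩ := hierModelSub_decomp hd hqb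
    have hQmem : Q ∈ hierModel d 𝓕 := by
      refine mem_hierModel_of hd 𝓕 (𝓕.filter (· ⊆ α)) (𝓕.filter (· ⊆ β))
        (Finset.filter_subset _ _) (Finset.filter_subset _ _) ΘA ΘB hΘA hΘB
        F₁ hF₁𝓕 hSF₁ (fun s => (qaS s)⁻¹) (fun s => inv_pos.mpr (hqaS0 s))
        (cA * cB) (mul_pos hcA hcB) Q ?_ hQsum
      intro x
      have hresA : ∀ F ∈ 𝓕.filter (· ⊆ α),
          ΘA F (resAny hd α F (rest α x)) = ΘA F (rest F x) := by
        intro F hF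
        congr 1
        funext i
        exact resAny_apply (γ := α) (T := F) hd (rest α x) i ((Finset.mem_filter.mp hF).2 i.2)
      have hresB : ∀ F ∈ 𝓕.filter (· ⊆ β),
          ΘB F (resAny hd β F (rest β x)) = ΘB F (rest F x) := by
        intro F hF
        congr 1
        funext i
        exact resAny_apply (γ := β) (T := F) hd (rest β x) i ((Finset.mem_filter.mp hF).2 i.2)
      show qa (rest α x) * qb (rest β x) / qaS (rest S x) = _
      rw [hrepA (rest α x), hrepB (rest β x), Finset.prod_congr rfl hresA,
        Finset.prod_congr rfl hresB, div_eq_mul_inv]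
      ring
    have hqaSsum : ∑ y, qaS y = 1 := by rw [hqaSdef, margSub_sum hSα, hqa.1.2]
    have hgibbs : 0 ≤ ∑ y, pS y * Real.log (pS y / qaS y) :=
      gibbs pS qaS (fun y => (hpS y).le) hpSsum (fun y => (hqaS0 y).le)
        (le_of_eq hqaSsum) (fun y _ => hqaS0 y)
    have hthird : ∑ y, pS y * Real.log (qaS y / pS y) ≤ 0 := by
      have he : ∀ y ∈ Finset.univ, pS y * Real.log (qaS y / pS y)
          = -(pS y * Real.log (pS y / qaS y)) := by
        intro y _
        rw [← inv_div, Real.log_inv]; ring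
      rw [Finset.sum_congr rfl he, Finset.sum_neg_distrib]
      linarith
    refine ⟨Q, hQmem, hQpos, ?_⟩
    calc ∑ x, u x * Real.log (u x / Q x)
        = (∑ xa, v xa * Real.log (v xa / qa xa))
          + (∑ xb, w xb * Real.log (w xb / qb xb))
          + (∑ y, pS y * Real.log (qaS y / pS y)) := KLsplit qa qb qaS hqa0 hqb0 hqaS0
      _ ≤ _ := by linarith
  -- nonnegativity facts
  have hclM : closure (hierModel d 𝓕) ⊆ simplex (∀ i, Fin (d i)) :=
    closure_subset_simplex (fun q hq => hq.1)
  have hclMα : closure (hierModelSub d α (𝓕.filter (· ⊆ α))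
      (fun F hF => (Finset.mem_filter.mp hF).2)) ⊆ simplex (PS d α) :=
    closure_subset_simplex (fun q hq => hq.1)
  have hclMβ : closure (hierModelSub d β (𝓕.filter (· ⊆ β))
      (fun F hF => (Finset.mem_filter.mp hF).2)) ⊆ simplex (PS d β) :=
    closure_subset_simplex (fun q hq => hq.1)
  refine ⟨husimplex, le_antisymm ?_ ?_⟩
  · -- ≤ : upper bound via composition
    refine ereal_le_add_of_forall _ _ (KL v) (KL w) _
      (fun qa hqa => KL_nonneg v qa hv.1 (hclMα hqa).1 (le_of_eq (hclMα hqa).2))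
      (fun qb hqb => KL_nonneg w qb hw.1 (hclMβ hqb).1 (le_of_eq (hclMβ hqb).2)) ?_
    intro qa hqa qb hqb
    have hKLb0 : (0 : EReal) ≤ KL w qb :=
      KL_nonneg w qb hw.1 (hclMβ hqb).1 (le_of_eq (hclMβ hqb).2)
    have hKLa0 : (0 : EReal) ≤ KL v qa :=
      KL_nonneg v qa hv.1 (hclMα hqa).1 (le_of_eq (hclMα hqa).2)
    by_cases hsa : ∀ xa, qa xa = 0 → v xa = 0
    case neg =>
      have htop : KL v qa = ⊤ := by unfold KL; rw [if_neg hsa]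
      rw [htop, EReal.top_add_of_ne_bot (fun hb => by rw [hb] at hKLb0; simp at hKLb0)]
      exact le_top
    by_cases hsb : ∀ xb, qb xb = 0 → w xb = 0
    case neg =>
      have htop : KL w qb = ⊤ := by unfold KL; rw [if_neg hsb]
      rw [htop, EReal.add_top_of_ne_bot (fun hb => by rw [hb] at hKLa0; simp at hKLa0)]
      exact le_top
    rw [KL_coe v qa hsa, KL_coe w qb hsb, ← EReal.coe_add]
    obtain ⟨qan, hqan, hqalim⟩ := mem_closure_iff_seq_limit.mp hqa
    obtain ⟨qbn, hqbn, hqblim⟩ := mem_closure_iff_seq_limit.mp hqb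
    have hbound : ∀ n, divFrom (closure (hierModel d 𝓕)) u ≤
        (((∑ xa, v xa * Real.log (v xa / qan n xa))
          + (∑ xb, w xb * Real.log (w xb / qbn n xb)) : ℝ) : EReal) := by
      intro n
      obtain ⟨Q, hQmem, hQpos, hKL⟩ := comp (qan n) (hqan n) (qbn n) (hqbn n)
      calc divFrom (closure (hierModel d 𝓕)) u ≤ KL u Q :=
            iInf₂_le Q (subset_closure hQmem)
        _ = ((∑ x, u x * Real.log (u x / Q x) : ℝ) : EReal) :=
            KL_coe u Q (fun x hx => absurd hx (hQpos x).ne')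
        _ ≤ _ := EReal.coe_le_coe_iff.mpr hKL
    have hDv : Tendsto (fun n => ∑ xa, v xa * Real.log (v xa / qan n xa)) atTop
        (nhds (∑ xa, v xa * Real.log (v xa / qa xa))) :=
      tendsto_KLsum v (fun n => qan n) qa (fun i => tendsto_pi_nhds.mp hqalim i)
        (fun i hi hz => hi (hsa i hz))
    have hDw : Tendsto (fun n => ∑ xb, w xb * Real.log (w xb / qbn n xb)) atTop
        (nhds (∑ xb, w xb * Real.log (w xb / qb xb))) :=
      tendsto_KLsum w (fun n => qbn n) qb (fun i => tendsto_pi_nhds.mp hqblim i)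
        (fun i hi hz => hi (hsb i hz))
    have h0 : (0 : EReal) ≤ divFrom (closure (hierModel d 𝓕)) u :=
      le_iInf₂ fun q hq => KL_nonneg u q husimplex (hclM hq).1 (le_of_eq (hclM hq).2)
    have hne_top : divFrom (closure (hierModel d 𝓕)) u ≠ ⊤ := by
      intro ht
      have := hbound 0
      rw [ht] at this
      exact absurd (top_le_iff.mp this) (EReal.coe_ne_top _)
    have hne_bot : divFrom (closure (hierModel d 𝓕)) u ≠ ⊥ := by
      intro hb
      rw [hb] at h0
      simp at h0
    obtain ⟨r, hr⟩ : ∃ r : ℝ, divFrom (closure (hierModel d 𝓕)) u = (r : EReal) :=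
      ⟨_, (EReal.coe_toReal hne_top hne_bot).symm⟩
    rw [hr]
    refine EReal.coe_le_coe_iff.mpr ?_
    refine ge_of_tendsto' (hDv.add hDw) fun n => ?_
    have := hbound n
    rw [hr] at this
    exact EReal.coe_le_coe_iff.mp this
  · -- ≥ : A + B ≤ divFrom (closure M) u
    set DA := divFrom (closure (hierModelSub d α (𝓕.filter (· ⊆ α))
      (fun F hF => (Finset.mem_filter.mp hF).2))) v with hDAdef
    set DB := divFrom (closure (hierModelSub d β (𝓕.filter (· ⊆ β))
      (fun F hF => (Finset.mem_filter.mp hF).2))) w with hDBdef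
    have hDA0 : (0 : EReal) ≤ DA :=
      le_iInf₂ fun qa hqa => KL_nonneg v qa hv.1 (hclMα hqa).1 (le_of_eq (hclMα hqa).2)
    have hDB0 : (0 : EReal) ≤ DB :=
      le_iInf₂ fun qb hqb => KL_nonneg w qb hw.1 (hclMβ hqb).1 (le_of_eq (hclMβ hqb).2)
    show DA + DB ≤ ⨅ q ∈ closure (hierModel d 𝓕), KL u q
    refine le_iInf₂ fun q hq => ?_
    by_cases hsup : ∀ x, q x = 0 → u x = 0
    case neg =>
      have htop : KL u q = ⊤ := by unfold KL; rw [if_neg hsup]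
      rw [htop]; exact le_top
    rw [KL_coe u q hsup]
    obtain ⟨qn, hqn, hqlim⟩ := mem_closure_iff_seq_limit.mp hq
    have hbound : ∀ n, DA + DB ≤
        ((∑ x, u x * Real.log (u x / qn n x) : ℝ) : EReal) := by
      intro n
      obtain ⟨c, Θ, hc, hΘ, hrep⟩ := hier_decomp hd hsplit (hqn n)
      set fa : PS d α → ℝ := fun xa => ∏ F ∈ 𝓕.filter (· ⊆ α), Θ F (resAny hd α F xa)
        with hfadef
      set gb : PS d β → ℝ :=
        fun xb => ∏ F ∈ 𝓕.filter (fun F => ¬ F ⊆ α), Θ F (resAny hd β F xb) with hgbdef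
      have hfapos : ∀ xa, 0 < fa xa := fun xa => Finset.prod_pos fun F _ => hΘ F _
      have hgbpos : ∀ xb, 0 < gb xb := fun xb => Finset.prod_pos fun F _ => hΘ F _
      have hrepc : ∀ x, qn n x = c * (fa (rest α x) * gb (rest β x)) := hrep
      have hrepc' : ∀ x, qn n x = c * (gb (rest β x) * fa (rest α x)) := fun x => by
        rw [hrepc x]; ring
      have hG : ∀ xa, margF d α (qn n) xa
          = c * (fa xa * margSub d β S gb (rsub hSα xa)) :=
        fun xa => margF_of_prod hmαβ hSα hSβ hcapαβ c fa gb (qn n) hrepc xa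
      have hB : ∀ xb, margF d β (qn n) xb
          = c * (gb xb * margSub d α S fa (rsub hSβ xb)) :=
        fun xb => margF_of_prod hmβα hSβ hSα hcapβα c gb fa (qn n) hrepc' xb
      have hGpos : ∀ y', 0 < margSub d β S gb y' := margSub_pos hd hSβ hgbpos
      have hFapos : ∀ y', 0 < margSub d α S fa y' := margSub_pos hd hSα hfapos
      have hqmα : margSub d α S (margF d α (qn n)) = margF d S (qn n) :=
        margSub_margF hSα (qn n)
      have hqS : ∀ y', margF d S (qn n) y'
          = c * margSub d α S fa y' * margSub d β S gb y' := by
        intro y'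
        rw [← hqmα]
        have he : margF d α (qn n)
            = fun xa => (c * fa xa) * margSub d β S gb (rsub hSα xa) :=
          funext fun xa => by rw [hG xa]; ring
        rw [he, margSub_mul_rsub hSα (fun xa => c * fa xa) (margSub d β S gb) y',
          margSub_const_mul]
      have hqSpos : ∀ y', 0 < margF d S (qn n) y' := fun y' => by
        rw [hqS y']
        exact mul_pos (mul_pos hc (hFapos y')) (hGpos y')
      set Aq : PS d α → ℝ := fun xa => margF d α (qn n) xa *
        (pS (rsub hSα xa) / margF d S (qn n) (rsub hSα xa)) with hAqdef
      set Bq : PS d β → ℝ := margF d β (qn n) with hBqdef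
      have hAqpos : ∀ xa, 0 < Aq xa := by
        intro xa
        show 0 < margF d α (qn n) xa *
          (pS (rsub hSα xa) / margF d S (qn n) (rsub hSα xa))
        have hm : 0 < margF d α (qn n) xa := by
          rw [hG xa]; exact mul_pos hc (mul_pos (hfapos xa) (hGpos _))
        exact mul_pos hm (div_pos (hpS _) (hqSpos _))
      have hBqpos : ∀ xb, 0 < Bq xb := by
        intro xb
        rw [hB xb]
        exact mul_pos hc (mul_pos (hgbpos xb) (hFapos _))
      have hAsum : ∑ xa, Aq xa = 1 := by
        calc ∑ xa, Aq xa
            = ∑ y', margSub d α S (margF d α (qn n)) y'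
              * (pS y' / margF d S (qn n) y') :=
              push hSα (margF d α (qn n)) (fun y' => pS y' / margF d S (qn n) y')
          _ = ∑ y', pS y' := by
              rw [hqmα]
              refine Finset.sum_congr rfl fun y' _ => ?_
              rw [mul_comm, div_mul_cancel₀ _ (hqSpos y').ne']
          _ = 1 := hpSsum
      have hBsum : ∑ xb, Bq xb = 1 := by
        show ∑ xb, margF d β (qn n) xb = 1
        rw [margF_sum, (hqn n).1.2]
      have hAmem : Aq ∈ hierModelSub d α (𝓕.filter (· ⊆ α))
          (fun F hF => (Finset.mem_filter.mp hF).2) := by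
        refine mem_hierModelSub_of hd (𝓕.filter (· ⊆ α))
          (fun F hF => (Finset.mem_filter.mp hF).2) (𝓕.filter (· ⊆ α))
          Finset.Subset.rfl Θ hΘ F₁ (Finset.mem_filter.mpr ⟨hF₁𝓕, hF₁α⟩) hSF₁
          (fun s => margSub d β S gb s * (pS s / margF d S (qn n) s))
          (fun s => mul_pos (hGpos s) (div_pos (hpS s) (hqSpos s))) c hc Aq ?_ hAsum
        intro xa
        show margF d α (qn n) xa * (pS (rsub hSα xa) / margF d S (qn n) (rsub hSα xa))
          = c * (fa xa * (margSub d β S gb (rsub hSα xa)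
            * (pS (rsub hSα xa) / margF d S (qn n) (rsub hSα xa))))
        rw [hG xa]
        ring
      have hGsub : 𝓕.filter (fun F => ¬ F ⊆ α) ⊆ 𝓕.filter (· ⊆ β) := by
        intro F hF
        have h1 := Finset.mem_filter.mp hF
        exact Finset.mem_filter.mpr ⟨h1.1, (hsplit F h1.1).resolve_left h1.2⟩
      have hBmem : Bq ∈ hierModelSub d β (𝓕.filter (· ⊆ β))
          (fun F hF => (Finset.mem_filter.mp hF).2) := by
        refine mem_hierModelSub_of hd (𝓕.filter (· ⊆ β))
          (fun F hF => (Finset.mem_filter.mp hF).2) (𝓕.filter (fun F => ¬ F ⊆ α))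
          hGsub Θ hΘ F₂ (Finset.mem_filter.mpr ⟨hF₂𝓕, hF₂β⟩) hSF₂
          (fun s => margSub d α S fa s) (fun s => hFapos s) c hc Bq ?_ hBsum
        intro xb
        show margF d β (qn n) xb = c * (gb xb * margSub d α S fa (rsub hSβ xb))
        exact hB xb
      have hQid : ∀ x ∈ Finset.univ, u x * Real.log (u x / qn n x)
          = u x * Real.log (u x / (Aq (rest α x) * Bq (rest β x) / pS (rest S x))) := by
        intro x _
        have e1 : Aq (rest α x) = margF d α (qn n) (rest α x)
            * (pS (rest S x) / margF d S (qn n) (rest S x)) := rfl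
        have e3 : margF d α (qn n) (rest α x)
            = c * (fa (rest α x) * margSub d β S gb (rest S x)) := hG (rest α x)
        have e4 : Bq (rest β x)
            = c * (gb (rest β x) * margSub d α S fa (rest S x)) := hB (rest β x)
        have e5 : margF d S (qn n) (rest S x)
            = c * margSub d α S fa (rest S x) * margSub d β S gb (rest S x) :=
          hqS (rest S x)
        have hqid : qn n x = Aq (rest α x) * Bq (rest β x) / pS (rest S x) := by
          rw [hrepc x, e1, e3, e4, e5]
          have n1 := hpS0 (rest S x)
          have n2 := hc.ne'
          have n3 := (hFapos (rest S x)).ne'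
          have n4 := (hGpos (rest S x)).ne'
          field_simp
        rw [hqid]
      have hKLid : ∑ x, u x * Real.log (u x / qn n x)
          = (∑ xa, v xa * Real.log (v xa / Aq xa))
            + (∑ xb, w xb * Real.log (w xb / Bq xb)) := by
        rw [Finset.sum_congr rfl hQid, KLsplit Aq Bq pS hAqpos hBqpos hpS]
        have hz : ∀ y' ∈ Finset.univ, pS y' * Real.log (pS y' / pS y') = 0 := by
          intro y' _
          rw [div_self (hpS0 y'), Real.log_one, mul_zero]
        rw [Finset.sum_congr rfl hz, Finset.sum_const_zero, add_zero]
      calc DA + DB ≤ KL v Aq + KL w Bq :=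
            add_le_add (iInf₂_le Aq (subset_closure hAmem))
              (iInf₂_le Bq (subset_closure hBmem))
        _ = (((∑ xa, v xa * Real.log (v xa / Aq xa))
            + (∑ xb, w xb * Real.log (w xb / Bq xb)) : ℝ) : EReal) := by
            rw [KL_coe v Aq (fun xa hxa => absurd hxa (hAqpos xa).ne'),
              KL_coe w Bq (fun xb hxb => absurd hxb (hBqpos xb).ne'), ← EReal.coe_add]
        _ = ((∑ x, u x * Real.log (u x / qn n x) : ℝ) : EReal) := by rw [hKLid]
    have hD : Tendsto (fun n => ∑ x, u x * Real.log (u x / qn n x)) atTop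
        (nhds (∑ x, u x * Real.log (u x / q x))) :=
      tendsto_KLsum u (fun n => qn n) q (fun i => tendsto_pi_nhds.mp hqlim i)
        (fun i hi hz => hi (hsup i hz))
    have hne_top : DA + DB ≠ ⊤ := by
      intro ht
      have := hbound 0
      rw [ht] at this
      exact absurd (top_le_iff.mp this) (EReal.coe_ne_top _)
    have hne_bot : DA + DB ≠ ⊥ := by
      have h00 : (0 : EReal) ≤ DA + DB := add_nonneg hDA0 hDB0
      intro hb
      rw [hb] at h00
      simp at h00
    obtain ⟨r, hr⟩ : ∃ r : ℝ, DA + DB = (r : EReal) :=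
      ⟨_, (EReal.coe_toReal hne_top hne_bot).symm⟩
    rw [hr]
    refine EReal.coe_le_coe_iff.mpr (ge_of_tendsto' hD fun n => ?_)
    have := hbound n
    rw [hr] at this
    exact EReal.coe_le_coe_iff.mp this
end
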